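/- arXiv:1507.01418 — 6 statements merged into one kernel-verified Lean document; each statement's English description precedes it below -/
import Mathlib

section
/- Let X be a complex Banach space, let A be a bounded linear operator on X, let θ ∈ ℝ and ω ∈ ℝ, and set A_θ := e^{-iθ}A. Then the following are equivalent: (i) ‖exp(t A_θ)‖ ≤ e^{tω} for all real t ≥ 0; (ii) for every real λ > ω the operator e^{iθ}λ·I − A is invertible in the algebra of bounded operators on X (i.e. e^{iθ}λ belongs to the resolvent set of A) and ‖(e^{iθ}λ·I − A)^{-1}‖ ≤ 1/(λ − ω). -/
open Complex

variable {X : Type*} [NormedAddCommGroup X] [NormedSpace ℂ X] [CompleteSpace X]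

/-- The open half plane `H_{θ,ω}`, the rotation by the angle `θ` of `{z | Re z > ω}`. -/
def halfPlane (θ ω : ℝ) : Set ℂ :=
  {z : ℂ | ω < (Complex.exp (-(θ : ℂ) * Complex.I) * z).re}

/-- The numerical resolvent set of a bounded operator `A` : the union of all open half
planes `H_{θ,ω}` contained in the resolvent set of `A` on which
`‖R(z, A)‖ ≤ 1 / dist(z, ∂H_{θ,ω}) = 1 / (Re (e^{-iθ} z) - ω)`. -/
noncomputable def numResolventSet (A : X →L[ℂ] X) : Set ℂ :=
  {z : ℂ | ∃ θ ω : ℝ, z ∈ halfPlane θ ω ∧ halfPlane θ ω ⊆ resolventSet ℂ A ∧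
    ∀ w ∈ halfPlane θ ω,
      ‖resolvent A w‖ ≤ 1 / ((Complex.exp (-(θ : ℂ) * Complex.I) * w).re - ω)}

/-- The numerical spectrum of a bounded operator `A`. -/
noncomputable def numSpectrum (A : X →L[ℂ] X) : Set ℂ := (numResolventSet A)ᶜ

/-- The duality set `J(x)` of a vector `x`. -/
noncomputable def dualitySet (x : X) : Set (X →L[ℂ] ℂ) :=
  {j | j x = (‖x‖ ^ 2 : ℝ) ∧ ‖j‖ = ‖x‖}


open NormedSpace Filter Topology

set_option linter.unusedSectionVars false
set_option maxHeartbeats 1000000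

section Aux
variable {𝔸 : Type*} [NormedRing 𝔸] [NormedAlgebra ℂ 𝔸] [CompleteSpace 𝔸]

lemma HY.norm_coeff (n : ℕ) (x : 𝔸) :
    ‖((n.factorial : ℂ))⁻¹ • x ^ n‖ = ((n.factorial : ℝ))⁻¹ * ‖x ^ n‖ := by
  rw [norm_smul, norm_inv]
  norm_num

lemma HY.real_hasSum (x : 𝔸) :
    HasSum (fun n : ℕ => ‖x‖ ^ n / n.factorial) (Real.exp ‖x‖) := by
  rw [Real.exp_eq_exp_ℝ]
  exact expSeries_div_hasSum_exp ‖x‖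

lemma HY.norm_exp_le (h1 : ‖(1 : 𝔸)‖ ≤ 1) (x : 𝔸) : ‖exp x‖ ≤ Real.exp ‖x‖ := by
  simp only [exp_eq_tsum ℂ]
  refine tsum_of_norm_bounded (HY.real_hasSum x) fun n => ?_
  rw [HY.norm_coeff]
  rcases Nat.eq_zero_or_pos n with rfl | hn
  · simpa using h1
  · rw [div_eq_inv_mul]
    exact mul_le_mul_of_nonneg_left (norm_pow_le' x hn) (by positivity)

lemma HY.exp_sub_one (x : 𝔸) :
    exp x - 1 = ∑' n : ℕ, (((n + 1).factorial : ℂ))⁻¹ • x ^ (n + 1) := by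
  have hs := expSeries_summable' (𝕂 := ℂ) x
  simp only [exp_eq_tsum ℂ]
  rw [Summable.tsum_eq_zero_add hs]
  simp

lemma HY.norm_exp_sub_one_le (x : 𝔸) : ‖exp x - 1‖ ≤ ‖x‖ * Real.exp ‖x‖ := by
  rw [HY.exp_sub_one]
  refine tsum_of_norm_bounded ((HY.real_hasSum x).mul_left ‖x‖) fun n => ?_
  rw [HY.norm_coeff]
  calc ((((n+1).factorial : ℝ))⁻¹ * ‖x ^ (n+1)‖)
      ≤ ((n.factorial : ℝ))⁻¹ * ‖x‖ ^ (n + 1) := by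
        apply mul_le_mul
        · rw [inv_le_inv₀ (by positivity) (by positivity)]
          exact_mod_cast Nat.factorial_le (Nat.le_succ n)
        · exact norm_pow_le' x n.succ_pos
        · positivity
        · positivity
    _ = ‖x‖ * (‖x‖ ^ n / n.factorial) := by
        rw [pow_succ]
        ring

lemma HY.exp_sub_one_sub (x : 𝔸) :
    exp x - 1 - x = ∑' n : ℕ, (((n + 2).factorial : ℂ))⁻¹ • x ^ (n + 2) := by
  have hs := expSeries_summable' (𝕂 := ℂ) x
  have hs1 : Summable (fun n : ℕ => ((n + 1).factorial : ℂ)⁻¹ • x ^ (n + 1)) := by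
    exact_mod_cast (summable_nat_add_iff 1).mpr hs
  rw [HY.exp_sub_one, Summable.tsum_eq_zero_add hs1]
  simp

lemma HY.norm_exp_sub_one_sub_le (x : 𝔸) :
    ‖exp x - 1 - x‖ ≤ ‖x‖ ^ 2 * Real.exp ‖x‖ := by
  rw [HY.exp_sub_one_sub]
  refine tsum_of_norm_bounded ((HY.real_hasSum x).mul_left (‖x‖ ^ 2)) fun n => ?_
  rw [HY.norm_coeff]
  calc ((((n+2).factorial : ℝ))⁻¹ * ‖x ^ (n+2)‖)
      ≤ ((n.factorial : ℝ))⁻¹ * ‖x‖ ^ (n + 2) := by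
        apply mul_le_mul
        · rw [inv_le_inv₀ (by positivity) (by positivity)]
          exact_mod_cast Nat.factorial_le (by omega)
        · exact norm_pow_le' x (by omega)
        · positivity
        · positivity
    _ = ‖x‖ ^ 2 * (‖x‖ ^ n / n.factorial) := by
        rw [pow_add]
        ring

end Aux

section Aux2
variable {𝔸 : Type*} [NormedRing 𝔸] [NormedAlgebra ℂ 𝔸] [CompleteSpace 𝔸]

lemma HY.real_smul (r : ℝ) (a : 𝔸) : r • a = (r : ℂ) • a := by
  rw [← algebraMap_smul ℂ r a, Complex.coe_algebraMap]

lemma HY.smul_mul_smul (c d : ℂ) (a b : 𝔸) : (c • a) * (d • b) = (c * d) • (a * b) := by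
  rw [smul_mul_assoc, mul_smul_comm, smul_smul]

/-- units transfer through nonzero scalar multiplication -/
lemma HY.isUnit_smul_iff {c : ℂ} (hc : c ≠ 0) (M : 𝔸) : IsUnit (c • M) ↔ IsUnit M := by
  have h : ∀ (d : ℂ), d ≠ 0 → ∀ (N : 𝔸), IsUnit N → IsUnit (d • N) := by
    rintro d hd N ⟨u, rfl⟩
    exact ⟨⟨d • u, d⁻¹ • (↑u⁻¹ : 𝔸), by
        rw [HY.smul_mul_smul, mul_inv_cancel₀ hd, u.mul_inv, one_smul], by
        rw [HY.smul_mul_smul, inv_mul_cancel₀ hd, u.inv_mul, one_smul]⟩, rfl⟩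
  constructor
  · intro hu
    have := h c⁻¹ (inv_ne_zero hc) _ hu
    rwa [smul_smul, inv_mul_cancel₀ hc, one_smul] at this
  · exact h c hc M

lemma HY.ring_inverse_smul {c : ℂ} (hc : c ≠ 0) (M : 𝔸) :
    Ring.inverse (c • M) = c⁻¹ • Ring.inverse M := by
  by_cases hM : IsUnit M
  · rcases hM with ⟨u, rfl⟩
    have hcu : (c • (u : 𝔸)) * (c⁻¹ • (↑u⁻¹ : 𝔸)) = 1 := by
      rw [HY.smul_mul_smul, mul_inv_cancel₀ hc, u.mul_inv, one_smul]
    have huc : (c⁻¹ • (↑u⁻¹ : 𝔸)) * (c • (u : 𝔸)) = 1 := by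
      rw [HY.smul_mul_smul, inv_mul_cancel₀ hc, u.inv_mul, one_smul]
    have : Ring.inverse ((⟨c • u, c⁻¹ • (↑u⁻¹ : 𝔸), hcu, huc⟩ : 𝔸ˣ) : 𝔸)
        = c⁻¹ • (↑u⁻¹ : 𝔸) := Ring.inverse_unit _
    rw [Ring.inverse_unit u]
    exact this
  · rw [Ring.inverse_non_unit _ hM,
      Ring.inverse_non_unit _ (fun h => hM ((HY.isUnit_smul_iff hc M).mp h)), smul_zero]

/-- `exp (x + z • 1) = exp z • exp x` -/
lemma HY.exp_add_smul_one (x : 𝔸) (z : ℂ) :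
    exp (x + z • (1 : 𝔸)) = Complex.exp z • exp x := by
  let +nondep : NormedAlgebra ℚ 𝔸 := .restrictScalars ℚ ℂ 𝔸
  rw [← Algebra.algebraMap_eq_smul_one,
    exp_add_of_commute (((Algebra.commutes z x).symm : Commute x (algebraMap ℂ 𝔸 z))),
    ← algebraMap_exp_comm, ← Complex.exp_eq_exp_ℂ, Algebra.algebraMap_eq_smul_one,
    mul_smul_comm, mul_one]

/-- perturbation of a unit is a unit -/
lemma HY.isUnit_of_near {D L : 𝔸} (hD : IsUnit D) (h : ‖Ring.inverse D‖ * ‖L - D‖ < 1) :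
    IsUnit L := by
  have h1 : IsUnit (1 - -(Ring.inverse D * (L - D))) :=
    isUnit_one_sub_of_norm_lt_one (by
      rw [norm_neg]
      exact lt_of_le_of_lt (norm_mul_le _ _) h)
  have hL : L = D * (1 + Ring.inverse D * (L - D)) := by
    rw [mul_add, mul_one, ← mul_assoc, Ring.mul_inverse_cancel D hD, one_mul]
    abel
  rw [hL]
  exact hD.mul (by rwa [sub_neg_eq_add] at h1)

end Aux2
section Aux3
variable {𝔸 : Type*} [NormedRing 𝔸] [NormedAlgebra ℂ 𝔸] [CompleteSpace 𝔸]

lemma HY.norm_pow_le (h1 : ‖(1 : 𝔸)‖ ≤ 1) {E : 𝔸} {M : ℝ} (hE : ‖E‖ ≤ M) :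
    ∀ k : ℕ, ‖E ^ k‖ ≤ M ^ k := by
  intro k
  induction k with
  | zero => simpa using h1
  | succ k ih =>
      rw [pow_succ, pow_succ]
      exact le_trans (norm_mul_le _ _) (mul_le_mul ih hE (norm_nonneg _)
        (pow_nonneg (le_trans (norm_nonneg _) hE) _))

lemma HY.pow_sub_pow_norm (h1 : ‖(1 : 𝔸)‖ ≤ 1) {E S : 𝔸} {M : ℝ} (hM : 1 ≤ M)
    (hE : ‖E‖ ≤ M) (hS : ‖S‖ ≤ 1) :
    ∀ n : ℕ, ‖E ^ n - S ^ n‖ ≤ n * M ^ n * ‖E - S‖ := by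
  intro n
  have hM0 : (0:ℝ) ≤ M := le_trans zero_le_one hM
  induction n with
  | zero => simp
  | succ n ih =>
      have key : E ^ (n+1) - S ^ (n+1) = E ^ n * (E - S) + (E ^ n - S ^ n) * S := by
        rw [mul_sub, sub_mul, pow_succ, pow_succ]
        abel
      rw [key]
      calc ‖E ^ n * (E - S) + (E ^ n - S ^ n) * S‖
          ≤ ‖E ^ n * (E - S)‖ + ‖(E ^ n - S ^ n) * S‖ := norm_add_le _ _
        _ ≤ ‖E ^ n‖ * ‖E - S‖ + ‖E ^ n - S ^ n‖ * ‖S‖ :=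
            add_le_add (norm_mul_le _ _) (norm_mul_le _ _)
        _ ≤ M ^ n * ‖E - S‖ + (n * M ^ n * ‖E - S‖) * 1 := by
            apply add_le_add
            · exact mul_le_mul_of_nonneg_right (HY.norm_pow_le h1 hE n) (norm_nonneg _)
            · exact mul_le_mul ih hS (norm_nonneg _) (by positivity)
        _ = ((n:ℝ)+1) * ‖E - S‖ * M ^ n := by ring
        _ ≤ ((n:ℝ)+1) * ‖E - S‖ * M ^ (n+1) := by
            have h2 : M ^ n ≤ M ^ (n+1) := by
              calc M ^ n = M ^ n * 1 := (mul_one _).symm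
              _ ≤ M ^ n * M := mul_le_mul_of_nonneg_left hM (by positivity)
              _ = M ^ (n+1) := (pow_succ M n).symm
            exact mul_le_mul_of_nonneg_left h2 (by positivity)
        _ = ((n+1 : ℕ) : ℝ) * M ^ (n+1) * ‖E - S‖ := by push_cast; ring
end Aux3
section Core
variable {𝔸 : Type*} [NormedRing 𝔸] [NormedAlgebra ℂ 𝔸] [CompleteSpace 𝔸]

lemma HY.core_backward (h1 : ‖(1 : 𝔸)‖ ≤ 1) (C : 𝔸)
    (hres : ∀ l : ℝ, 0 < l → IsUnit ((l : ℂ) • (1 : 𝔸) - C) ∧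
      ‖Ring.inverse ((l : ℂ) • (1 : 𝔸) - C)‖ ≤ 1 / l)
    (t : ℝ) (ht : 0 ≤ t) : ‖exp (t • C)‖ ≤ 1 := by
  rcases eq_or_lt_of_le ht with h0 | htpos
  · rw [← h0, zero_smul, NormedSpace.exp_zero]; exact h1
  set c := ‖C‖ with hc
  have hc0 : 0 ≤ c := norm_nonneg _
  set K := 2 * t ^ 2 * c ^ 2 * Real.exp (t * c) * Real.exp (t * c) with hK
  have hK0 : 0 ≤ K := by positivity
  have key : ∀ n : ℕ, 1 ≤ n → ‖exp (t • C)‖ ≤ 1 + K / n := by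
    intro n hn
    have hn0 : (0 : ℝ) < n := by exact_mod_cast hn
    set h := t / n with hh
    have hhpos : 0 < h := div_pos htpos hn0
    have hhC : (h : ℂ) ≠ 0 := by exact_mod_cast hhpos.ne'
    set l := (n : ℝ) / t with hl
    have hlpos : 0 < l := div_pos hn0 htpos
    have hhl : h * l = 1 := by rw [hh, hl]; field_simp
    obtain ⟨hunit, hnorm⟩ := hres l hlpos
    have hhlC : (h : ℂ) * (l : ℂ) = 1 := by exact_mod_cast congrArg Complex.ofReal hhl
    have hMeq : (1 : 𝔸) - (h : ℂ) • C = (h : ℂ) • ((l : ℂ) • (1 : 𝔸) - C) := by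
      rw [smul_sub, smul_smul, hhlC, one_smul]
    set M : 𝔸 := (1 : 𝔸) - (h : ℂ) • C with hM
    have hMunit : IsUnit M := by
      rw [hMeq]; exact (HY.isUnit_smul_iff hhC _).mpr hunit
    set S := Ring.inverse M with hS
    have hSnorm : ‖S‖ ≤ 1 := by
      rw [hS, hMeq, HY.ring_inverse_smul hhC]
      rw [norm_smul, norm_inv]
      calc ‖((h : ℂ))‖⁻¹ * ‖Ring.inverse ((l : ℂ) • (1 : 𝔸) - C)‖
          ≤ h⁻¹ * (1 / l) := by
            apply mul_le_mul _ hnorm (norm_nonneg _) (by positivity)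
            rw [Complex.norm_real, Real.norm_of_nonneg hhpos.le]
        _ = 1 := by field_simp; linarith [hhl]
    set x := (h : ℂ) • C with hx
    have hxnorm : ‖x‖ = h * c := by
      rw [hx, norm_smul, Complex.norm_real, Real.norm_of_nonneg hhpos.le, hc]
    have hEnorm : ‖exp x‖ ≤ Real.exp (h * c) := by
      have := HY.norm_exp_le h1 x
      rwa [hxnorm] at this
    set E := exp x with hE
    have hSM : S * M = 1 := Ring.inverse_mul_cancel M hMunit
    have hES : E - S = S * (M * E - 1) := by
      rw [mul_sub, ← mul_assoc, hSM, one_mul, mul_one]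
    have hME1 : M * E - 1 = (E - 1 - x) - x * (E - 1) := by
      rw [hM]
      simp only [sub_mul, one_mul, mul_sub, mul_one]
      abel
    have hδ : ‖E - S‖ ≤ 2 * ((h * c) ^ 2 * Real.exp (h * c)) := by
      rw [hES]
      calc ‖S * (M * E - 1)‖ ≤ ‖S‖ * ‖M * E - 1‖ := norm_mul_le _ _
        _ ≤ 1 * ‖M * E - 1‖ := mul_le_mul_of_nonneg_right hSnorm (norm_nonneg _)
        _ = ‖(E - 1 - x) - x * (E - 1)‖ := by rw [one_mul, hME1]
        _ ≤ ‖E - 1 - x‖ + ‖x * (E - 1)‖ := norm_sub_le _ _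
        _ ≤ ‖E - 1 - x‖ + ‖x‖ * ‖E - 1‖ := by
            exact add_le_add le_rfl (norm_mul_le _ _)
        _ ≤ (h * c) ^ 2 * Real.exp (h * c) + (h * c) * ((h * c) * Real.exp (h * c)) := by
            apply add_le_add
            · have := HY.norm_exp_sub_one_sub_le x
              rwa [hxnorm] at this
            · have h2 := HY.norm_exp_sub_one_le x
              rw [hxnorm] at h2
              apply mul_le_mul _ h2 (norm_nonneg _) (by positivity)
              rw [hxnorm]
        _ = 2 * ((h * c) ^ 2 * Real.exp (h * c)) := by ring
    have hnh : ((n : ℝ)) * h = t := by rw [hh]; field_simp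
    have hexp_eq : exp (t • C) = E ^ n := by
      let +nondep : NormedAlgebra ℚ 𝔸 := .restrictScalars ℚ ℂ 𝔸
      rw [hE, hx, ← NormedSpace.exp_nsmul]
      congr 1
      have hc2 : ((n : ℂ)) * ((h : ℂ)) = (t : ℂ) := by
        exact_mod_cast congrArg Complex.ofReal hnh
      rw [HY.real_smul t C, ← Nat.cast_smul_eq_nsmul ℂ n ((h : ℂ) • C), smul_smul, hc2]
    have hfin : ‖E ^ n - S ^ n‖ ≤ n * Real.exp (h * c) ^ n * ‖E - S‖ :=
      HY.pow_sub_pow_norm h1 (Real.one_le_exp (by positivity)) hEnorm hSnorm n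
    have hexpn : Real.exp (h * c) ^ n = Real.exp (t * c) := by
      rw [← Real.exp_nat_mul]
      congr 1
      rw [← hnh]; ring
    have hSn : ‖S ^ n‖ ≤ 1 := by
      have := HY.norm_pow_le h1 hSnorm n
      simpa using this
    have hhle : h ≤ t := by
      rw [hh]
      apply div_le_self htpos.le (by exact_mod_cast hn)
    have hee : Real.exp (h * c) ≤ Real.exp (t * c) :=
      Real.exp_le_exp.mpr (mul_le_mul_of_nonneg_right hhle hc0)
    calc ‖exp (t • C)‖ = ‖(E ^ n - S ^ n) + S ^ n‖ := by rw [hexp_eq, sub_add_cancel]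
      _ ≤ ‖E ^ n - S ^ n‖ + ‖S ^ n‖ := norm_add_le _ _
      _ ≤ (n : ℝ) * Real.exp (t * c) * (2 * ((h * c) ^ 2 * Real.exp (h * c))) + 1 := by
          apply add_le_add _ hSn
          calc ‖E ^ n - S ^ n‖ ≤ n * Real.exp (h * c) ^ n * ‖E - S‖ := hfin
            _ ≤ (n : ℝ) * Real.exp (t * c) * (2 * ((h * c) ^ 2 * Real.exp (h * c))) := by
                rw [hexpn]
                exact mul_le_mul_of_nonneg_left hδ (by positivity)
      _ ≤ (n : ℝ) * Real.exp (t * c) * (2 * ((h * c) ^ 2 * Real.exp (t * c))) + 1 := by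
          have : (h * c) ^ 2 * Real.exp (h * c) ≤ (h * c) ^ 2 * Real.exp (t * c) :=
            mul_le_mul_of_nonneg_left hee (by positivity)
          have h2 : (0:ℝ) ≤ (n : ℝ) * Real.exp (t * c) := by positivity
          nlinarith
      _ = K / n + 1 := by
          rw [hK, hh]
          field_simp
      _ = 1 + K / n := by ring
  refine le_of_forall_pos_le_add fun ε hε => ?_
  rcases eq_or_lt_of_le hK0 with hK0' | hKpos
  · have := key 1 le_rfl
    rw [← hK0'] at this
    norm_num at this
    linarith
  · obtain ⟨n, hn⟩ := exists_nat_gt (K / ε)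
    have hn1 : 1 ≤ n := by
      rcases Nat.eq_zero_or_pos n with rfl | h'
      · exfalso
        have : (0:ℝ) ≤ K / ε := by positivity
        norm_num at hn
        linarith
      · exact h'
    have hkey := key n hn1
    have hn0 : (0:ℝ) < n := by exact_mod_cast hn1
    have : K / n < ε := by
      rw [div_lt_iff₀ hn0]
      rw [div_lt_iff₀ hε] at hn
      linarith
    linarith


lemma HY.core_forward (h1 : ‖(1 : 𝔸)‖ ≤ 1) (C : 𝔸)
    (hexp : ∀ t : ℝ, 0 ≤ t → ‖exp (t • C)‖ ≤ 1) (l : ℝ) (hl : 0 < l) :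
    IsUnit ((l : ℂ) • (1 : 𝔸) - C) ∧ ‖Ring.inverse ((l : ℂ) • (1 : 𝔸) - C)‖ ≤ 1 / l := by
  set L : 𝔸 := (l : ℂ) • (1 : 𝔸) - C with hL
  set Eop : 𝔸 := C - (l : ℂ) • (1 : 𝔸) with hEop
  have hGnorm : ∀ s : ℝ, 0 ≤ s → ‖exp (s • Eop)‖ ≤ Real.exp (-(s * l)) := by
    intro s hs
    have heq : s • Eop = s • C + ((-(s * l) : ℝ) : ℂ) • (1 : 𝔸) := by
      rw [HY.real_smul s Eop, HY.real_smul s C, hEop, smul_sub, smul_smul]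
      have hcast : ((-(s * l) : ℝ) : ℂ) = -((s : ℂ) * (l : ℂ)) := by push_cast; ring
      rw [hcast, neg_smul]
      abel
    rw [heq, HY.exp_add_smul_one, norm_smul]
    have hne : ‖Complex.exp ((-(s * l) : ℝ) : ℂ)‖ = Real.exp (-(s * l)) := by
      rw [Complex.norm_exp]
      norm_num
    rw [hne]
    calc Real.exp (-(s * l)) * ‖exp (s • C)‖ ≤ Real.exp (-(s * l)) * 1 :=
          mul_le_mul_of_nonneg_left (hexp s hs) (Real.exp_pos _).le
      _ = Real.exp (-(s * l)) := mul_one _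
  have hGlt : ∀ s : ℝ, 0 < s → ‖exp (s • Eop)‖ < 1 := fun s hs =>
    lt_of_le_of_lt (hGnorm s hs.le) (Real.exp_lt_one_iff.mpr (by nlinarith))
  have hderiv : HasDerivAt (fun s : ℝ => exp (s • Eop)) Eop 0 := by
    have h := hasDerivAt_exp_smul_const (𝕂 := ℝ) Eop 0
    rw [zero_smul, NormedSpace.exp_zero, one_mul] at h
    simpa using h
  have hslope : Tendsto (fun s : ℝ => s⁻¹ • (exp (s • Eop) - 1)) (𝓝[>] 0) (𝓝 Eop) := by
    have h2 : Tendsto (slope (fun s : ℝ => exp (s • Eop)) 0) (𝓝[≠] 0) (𝓝 Eop) :=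
      hasDerivAt_iff_tendsto_slope.mp hderiv
    have h3 := h2.mono_left (nhdsWithin_mono 0 (fun s (hs : s ∈ Set.Ioi 0) => ne_of_gt hs))
    refine h3.congr fun s => ?_
    rw [slope_def_module]
    simp [NormedSpace.exp_zero]
  set D := fun s : ℝ => s⁻¹ • ((1 : 𝔸) - exp (s • Eop)) with hDdef
  have hD : Tendsto D (𝓝[>] 0) (𝓝 L) := by
    have hLE : L = -Eop := by rw [hL, hEop]; abel
    rw [hLE]
    refine hslope.neg.congr fun s => ?_
    rw [hDdef, ← smul_neg, neg_sub]
  have hDunit : ∀ s : ℝ, 0 < s → IsUnit (D s) := by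
    intro s hs
    simp only [hDdef]
    rw [HY.real_smul]
    refine (HY.isUnit_smul_iff (by exact_mod_cast (inv_pos.mpr hs).ne') _).mpr ?_
    exact isUnit_one_sub_of_norm_lt_one (hGlt s hs)
  have hDbound : ∀ s : ℝ, 0 < s →
      ‖Ring.inverse (D s)‖ ≤ s * (1 - Real.exp (-(s * l)))⁻¹ := by
    intro s hs
    have hg := hGlt s hs
    have hg2 : 0 < 1 - Real.exp (-(s * l)) := by
      have := Real.exp_lt_one_iff.mpr (show -(s * l) < 0 by nlinarith)
      linarith
    simp only [hDdef]
    rw [HY.real_smul, HY.ring_inverse_smul (by exact_mod_cast (inv_pos.mpr hs).ne')]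
    rw [norm_smul, norm_inv, Complex.norm_real, Real.norm_of_nonneg (inv_pos.mpr hs).le, inv_inv]
    have hinv : ‖Ring.inverse ((1 : 𝔸) - exp (s • Eop))‖ ≤ (1 - ‖exp (s • Eop)‖)⁻¹ := by
      rw [← geom_series_eq_inverse _ hg]
      have := tsum_geometric_le_of_norm_lt_one _ hg
      linarith
    calc s * ‖Ring.inverse ((1 : 𝔸) - exp (s • Eop))‖
        ≤ s * (1 - ‖exp (s • Eop)‖)⁻¹ := mul_le_mul_of_nonneg_left hinv hs.le
      _ ≤ s * (1 - Real.exp (-(s * l)))⁻¹ := by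
          apply mul_le_mul_of_nonneg_left _ hs.le
          apply inv_anti₀ hg2
          linarith [hGnorm s hs.le]
  have hb : Tendsto (fun s : ℝ => s * (1 - Real.exp (-(s * l)))⁻¹) (𝓝[>] 0) (𝓝 (1 / l)) := by
    have hφ : HasDerivAt (fun s : ℝ => 1 - Real.exp (-(s * l))) l 0 := by
      have ha : HasDerivAt (fun s : ℝ => -(s * l)) (-l) 0 := by
        have := ((hasDerivAt_id (0 : ℝ)).mul_const l).neg; rw [one_mul] at this; exact this
      have hbb := (Real.hasDerivAt_exp (-(0 * l))).comp 0 ha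
      have hcc := hbb.const_sub 1
      simpa using hcc
    have hsl : Tendsto (slope (fun s : ℝ => 1 - Real.exp (-(s * l))) 0) (𝓝[≠] 0) (𝓝 l) :=
      hasDerivAt_iff_tendsto_slope.mp hφ
    have h4 : Tendsto (fun s : ℝ => (1 - Real.exp (-(s * l))) / s) (𝓝[>] 0) (𝓝 l) := by
      refine ((hsl.mono_left (nhdsWithin_mono 0
        (fun s (hs : s ∈ Set.Ioi 0) => ne_of_gt hs)))).congr fun s => ?_
      rw [slope_def_field]
      norm_num
    have h5 := h4.inv₀ hl.ne'
    rw [← one_div] at h5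
    refine h5.congr fun s => ?_
    rw [inv_div, div_eq_mul_inv]
  -- pick a good point
  have hb0pos : (0 : ℝ) < 1 / l + 1 := by positivity
  set b0 : ℝ := 1 / l + 1 with hb0
  set δ : ℝ := (2 * b0)⁻¹ with hδdef
  have hδpos : 0 < δ := by positivity
  have hev0 : ∀ᶠ s in 𝓝[>] (0 : ℝ), 0 < s :=
    eventually_mem_nhdsWithin
  have hbev : ∀ᶠ s in 𝓝[>] (0 : ℝ), s * (1 - Real.exp (-(s * l)))⁻¹ < b0 :=
    hb (Iio_mem_nhds (show 1 / l < b0 by rw [hb0]; linarith))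
  have hdistev : ∀ᶠ s in 𝓝[>] (0 : ℝ), ‖D s - L‖ < δ := by
    have := Metric.tendsto_nhds.mp hD δ hδpos
    simpa [dist_eq_norm] using this
  obtain ⟨s, hs0, hsb, hsd⟩ := (hev0.and (hbev.and hdistev)).exists
  have hprod : ‖Ring.inverse (D s)‖ * ‖L - D s‖ < 1 := by
    have h6 : ‖Ring.inverse (D s)‖ * ‖L - D s‖ < b0 * δ := by
      rcases eq_or_lt_of_le (norm_nonneg (L - D s)) with h7 | h7
      · rw [← h7, mul_zero]; positivity
      · exact mul_lt_mul'' (lt_of_le_of_lt (hDbound s hs0) hsb)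
          (by rwa [norm_sub_rev]) (norm_nonneg _) (norm_nonneg _)
    have hbδ : b0 * δ = 1 / 2 := by
      rw [hδdef]
      field_simp
    exact h6.trans_le (by rw [hbδ]; norm_num)
  have hLunit : IsUnit L := HY.isUnit_of_near (hDunit s hs0) hprod
  have hcont : Tendsto (fun s => Ring.inverse (D s)) (𝓝[>] (0 : ℝ)) (𝓝 (Ring.inverse L)) := by
    have hc := NormedRing.inverse_continuousAt hLunit.unit
    rw [hLunit.unit_spec] at hc
    exact hc.tendsto.comp hD
  have hnorm2 : Tendsto (fun s => ‖Ring.inverse (D s)‖) (𝓝[>] (0 : ℝ)) (𝓝 ‖Ring.inverse L‖) :=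
    hcont.norm
  refine ⟨hLunit, ?_⟩
  exact le_of_tendsto_of_tendsto hnorm2 hb
    (Filter.eventually_of_mem self_mem_nhdsWithin fun u hu => hDbound u hu)
end Core


/-- Hille–Yosida type equivalence (rotated, bounded case): `e^{-iθ}A` generates an
`ω`-contractive semigroup iff the resolvent estimate holds on `e^{iθ}(ω, ∞)`. -/
theorem semigroup_contraction_iff_resolvent_estimate (A : X →L[ℂ] X) (θ ω : ℝ) :
    (∀ t : ℝ, 0 ≤ t →
        ‖NormedSpace.exp (t • (Complex.exp (-(θ : ℂ) * Complex.I) • A))‖ ≤ Real.exp (t * ω)) ↔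
      (∀ lam : ℝ, ω < lam →
        (Complex.exp ((θ : ℂ) * Complex.I) * (lam : ℂ)) ∈ resolventSet ℂ A ∧
        ‖resolvent A (Complex.exp ((θ : ℂ) * Complex.I) * (lam : ℂ))‖ ≤ 1 / (lam - ω)) := by
  set u : ℂ := Complex.exp ((θ : ℂ) * Complex.I) with hu
  set v : ℂ := Complex.exp (-(θ : ℂ) * Complex.I) with hv
  have huv : u * v = 1 := by
    rw [hu, hv, ← Complex.exp_add, show (θ : ℂ) * Complex.I + -(θ : ℂ) * Complex.I = 0 by ring,
      Complex.exp_zero]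
  have hu0 : u ≠ 0 := Complex.exp_ne_zero _
  have hv0 : v ≠ 0 := Complex.exp_ne_zero _
  have hunorm : ‖u‖ = 1 := by
    rw [hu, Complex.norm_exp]
    norm_num
  set B : X →L[ℂ] X := v • A with hB
  set C : X →L[ℂ] X := B - (ω : ℂ) • (1 : X →L[ℂ] X) with hC
  have h1 : ‖(1 : X →L[ℂ] X)‖ ≤ 1 := by
    rw [ContinuousLinearMap.one_def]
    exact ContinuousLinearMap.norm_id_le
  -- norm relation for the semigroup part
  have hnorm_eq : ∀ t : ℝ, ‖exp (t • B)‖ = Real.exp (t * ω) * ‖exp (t • C)‖ := by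
    intro t
    have hsm : t • B = t • C + ((t * ω : ℝ) : ℂ) • (1 : X →L[ℂ] X) := by
      rw [hC, smul_sub, HY.real_smul t ((ω : ℂ) • (1 : X →L[ℂ] X)), smul_smul,
        show ((t * ω : ℝ) : ℂ) = (t : ℂ) * (ω : ℂ) by push_cast; ring]
      abel
    rw [hsm, HY.exp_add_smul_one, norm_smul, Complex.norm_exp]
    norm_num
  -- algebraic relation for the resolvent part
  have hkey : ∀ lam : ℝ, algebraMap ℂ (X →L[ℂ] X) (u * lam) - A
      = u • (((lam - ω : ℝ) : ℂ) • (1 : X →L[ℂ] X) - C) := by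
    intro lam
    have e1 : ((lam - ω : ℝ) : ℂ) • (1 : X →L[ℂ] X) - C
        = (lam : ℂ) • (1 : X →L[ℂ] X) - B := by
      rw [hC, show ((lam - ω : ℝ) : ℂ) = (lam : ℂ) - (ω : ℂ) by push_cast; ring, sub_smul]
      abel
    rw [e1, smul_sub, smul_smul, hB, smul_smul, huv, one_smul,
      Algebra.algebraMap_eq_smul_one]
  have hres_eq : ∀ lam : ℝ, resolvent A (u * lam)
      = u⁻¹ • Ring.inverse (((lam - ω : ℝ) : ℂ) • (1 : X →L[ℂ] X) - C) := by
    intro lam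
    have h7 : resolvent A (u * lam) = Ring.inverse (algebraMap ℂ (X →L[ℂ] X) (u * lam) - A) := rfl
    rw [h7, hkey lam]
    exact HY.ring_inverse_smul hu0 _
  constructor
  · intro hL lam hlam
    have hC1 : ∀ t : ℝ, 0 ≤ t → ‖exp (t • C)‖ ≤ 1 := by
      intro t ht
      have h2 := hL t ht
      rw [hnorm_eq t] at h2
      have h3 := Real.exp_pos (t * ω)
      calc ‖exp (t • C)‖ = (Real.exp (t * ω) * ‖exp (t • C)‖) / Real.exp (t * ω) := by
            field_simp
        _ ≤ Real.exp (t * ω) / Real.exp (t * ω) := by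
            apply div_le_div_of_nonneg_right h2 h3.le
        _ = 1 := by field_simp
    obtain ⟨hun, hbd⟩ := HY.core_forward h1 C hC1 (lam - ω) (by linarith)
    constructor
    · rw [spectrum.mem_resolventSet_iff, hkey lam]
      exact (HY.isUnit_smul_iff hu0 _).mpr hun
    · rw [hres_eq lam,
        show ‖u⁻¹ • Ring.inverse (((lam - ω : ℝ) : ℂ) • (1 : X →L[ℂ] X) - C)‖
          = ‖(u⁻¹ : ℂ)‖ * ‖Ring.inverse (((lam - ω : ℝ) : ℂ) • (1 : X →L[ℂ] X) - C)‖
          from norm_smul (α := ℂ) (β := X →L[ℂ] X) u⁻¹ _,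
        norm_inv, hunorm, inv_one, one_mul]
      exact hbd
  · intro hR t ht
    rw [hnorm_eq t]
    have hC2 : ∀ l : ℝ, 0 < l → IsUnit ((l : ℂ) • (1 : X →L[ℂ] X) - C) ∧
        ‖Ring.inverse ((l : ℂ) • (1 : X →L[ℂ] X) - C)‖ ≤ 1 / l := by
      intro l hlpos
      obtain ⟨hmem, hbd⟩ := hR (ω + l) (by linarith)
      rw [spectrum.mem_resolventSet_iff, hkey (ω + l)] at hmem
      rw [hres_eq (ω + l),
        show ‖u⁻¹ • Ring.inverse (((ω + l - ω : ℝ) : ℂ) • (1 : X →L[ℂ] X) - C)‖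
          = ‖(u⁻¹ : ℂ)‖ * ‖Ring.inverse (((ω + l - ω : ℝ) : ℂ) • (1 : X →L[ℂ] X) - C)‖
          from norm_smul (α := ℂ) (β := X →L[ℂ] X) u⁻¹ _,
        norm_inv, hunorm, inv_one, one_mul] at hbd
      have hcast : ((ω + l - ω : ℝ) : ℂ) = (l : ℂ) := by push_cast; ring
      rw [hcast] at hmem hbd
      rw [show ω + l - ω = l by ring] at hbd
      exact ⟨(HY.isUnit_smul_iff hu0 _).mp hmem, hbd⟩
    have := HY.core_backward h1 C hC2 t ht
    calc Real.exp (t * ω) * ‖exp (t • C)‖ ≤ Real.exp (t * ω) * 1 :=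
          mul_le_mul_of_nonneg_left this (Real.exp_pos _).le
      _ = Real.exp (t * ω) := mul_one _
end

section
/- Let X be a complex Banach space, let A be a bounded linear operator on X, let θ ∈ ℝ and ω ∈ ℝ. Then the following are equivalent: (i) for every real λ > ω, the point e^{iθ}λ belongs to the resolvent set of A and ‖(e^{iθ}λ·I − A)^{-1}‖ ≤ 1/(λ − ω); (ii) every z ∈ ℂ with Re(e^{-iθ}z) > ω belongs to the resolvent set of A and satisfies ‖(z·I − A)^{-1}‖ ≤ 1/(Re(e^{-iθ}z) − ω). -/
open Complex

variable {X : Type*} [NormedAddCommGroup X] [NormedSpace ℂ X] [CompleteSpace X]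

open spectrum

lemma neumann_step (A : X →L[ℂ] X) {z₀ z : ℂ} {M : ℝ} (hM : 0 < M)
    (h₀ : z₀ ∈ resolventSet ℂ A) (hn : ‖resolvent A z₀‖ ≤ M⁻¹)
    (hz : ‖z - z₀‖ < M) :
    z ∈ resolventSet ℂ A ∧ ‖resolvent A z‖ ≤ (M - ‖z - z₀‖)⁻¹ := by
  rw [spectrum.mem_resolventSet_iff] at h₀
  obtain ⟨u, hu⟩ := h₀
  have hres₀ : resolvent A z₀ = ↑u⁻¹ := by
    rw [resolvent, ← hu, Ring.inverse_unit]
  rw [hres₀] at hn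
  set c : ℂ := z - z₀ with hc
  set t : X →L[ℂ] X := -(algebraMap ℂ (X →L[ℂ] X) c * ↑u⁻¹) with htdef
  have hnorm1 : ‖(1 : X →L[ℂ] X)‖ ≤ 1 := ContinuousLinearMap.norm_id_le
  have halg : ‖algebraMap ℂ (X →L[ℂ] X) c‖ ≤ ‖c‖ := by
    rw [Algebra.algebraMap_eq_smul_one, norm_smul]
    calc ‖c‖ * ‖(1 : X →L[ℂ] X)‖ ≤ ‖c‖ * 1 :=
      mul_le_mul_of_nonneg_left hnorm1 (norm_nonneg c)
    _ = ‖c‖ := mul_one _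
  have ht : ‖t‖ ≤ ‖c‖ * ‖(↑u⁻¹ : X →L[ℂ] X)‖ := by
    rw [htdef, norm_neg]
    exact le_trans (norm_mul_le _ _) (mul_le_mul_of_nonneg_right halg (norm_nonneg _))
  have hcM : ‖c‖ * M⁻¹ < 1 := by
    rw [← div_eq_mul_inv, div_lt_one hM]; exact hz
  have ht' : ‖t‖ ≤ ‖c‖ * M⁻¹ :=
    le_trans ht (mul_le_mul_of_nonneg_left hn (norm_nonneg c))
  have ht1 : ‖t‖ < 1 := lt_of_le_of_lt ht' hcM
  set v : (X →L[ℂ] X)ˣ := Units.oneSub t ht1 * u with hvdef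
  have hv : (↑v : X →L[ℂ] X) = algebraMap ℂ (X →L[ℂ] X) z - A := by
    have : (↑v : X →L[ℂ] X) = (1 - t) * ↑u := rfl
    rw [this, htdef, sub_neg_eq_add, add_mul, one_mul, mul_assoc, Units.inv_mul, mul_one,
      hu, hc, map_sub]
    abel
  have hmem : z ∈ resolventSet ℂ A := by
    rw [spectrum.mem_resolventSet_iff]
    exact ⟨v, hv⟩
  refine ⟨hmem, ?_⟩
  have hresz : resolvent A z = ↑v⁻¹ := by
    rw [resolvent, ← hv, Ring.inverse_unit]
  have hvinv : (↑v⁻¹ : X →L[ℂ] X) = ↑u⁻¹ * ∑' n : ℕ, t ^ n := by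
    rw [hvdef, mul_inv_rev]
    rfl
  have hgeo : ‖∑' n : ℕ, t ^ n‖ ≤ (1 - ‖t‖)⁻¹ := by
    have := tsum_geometric_le_of_norm_lt_one t ht1
    linarith
  have key : ‖resolvent A z‖ ≤ ‖(↑u⁻¹ : X →L[ℂ] X)‖ * (1 - ‖t‖)⁻¹ := by
    rw [hresz, hvinv]
    exact le_trans (norm_mul_le _ _)
      (mul_le_mul_of_nonneg_left hgeo (norm_nonneg _))
  -- now arithmetic
  have hs := norm_nonneg (↑u⁻¹ : X →L[ℂ] X)
  set s := ‖(↑u⁻¹ : X →L[ℂ] X)‖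
  set r := ‖c‖ with hr
  have hrs : ‖t‖ ≤ r * s := ht
  have hr0 : 0 ≤ r := norm_nonneg c
  have hrslt : r * s < 1 := lt_of_le_of_lt (mul_le_mul_of_nonneg_left hn hr0) hcM
  have htnn : 0 ≤ ‖t‖ := norm_nonneg t
  have hMr : 0 < M - r := by rw [hr]; linarith
  have hsM : s * M ≤ 1 := by
    calc s * M ≤ M⁻¹ * M := mul_le_mul_of_nonneg_right hn hM.le
    _ = 1 := inv_mul_cancel₀ hM.ne'
  have hD : 0 < 1 - ‖t‖ := by linarith
  refine le_trans key ?_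
  rw [← div_eq_mul_inv, inv_eq_one_div, div_le_div_iff₀ hD hMr]
  nlinarith [hrs, hsM]

lemma exp_mul_norm (θ : ℝ) (z w : ℂ) :
    ‖z - Complex.exp ((θ : ℂ) * Complex.I) * w‖ =
      ‖Complex.exp (-(θ : ℂ) * Complex.I) * z - w‖ := by
  have h1 : Complex.exp (-(θ : ℂ) * Complex.I) * Complex.exp ((θ : ℂ) * Complex.I) = 1 := by
    rw [← Complex.exp_add]; ring_nf; exact Complex.exp_zero
  have h2 : Complex.exp (-(θ : ℂ) * Complex.I) * (z - Complex.exp ((θ : ℂ) * Complex.I) * w)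
      = Complex.exp (-(θ : ℂ) * Complex.I) * z - w := by
    rw [mul_sub, ← mul_assoc, h1, one_mul]
  have h3 : ‖Complex.exp (-(θ : ℂ) * Complex.I)‖ = 1 := by
    rw [Complex.norm_exp]
    norm_num
  rw [← h2, norm_mul, h3, one_mul]

lemma norm_sub_ofReal (w : ℂ) (lam : ℝ) :
    ‖w - (lam : ℂ)‖ = Real.sqrt ((w.re - lam) ^ 2 + w.im ^ 2) := by
  rw [Complex.norm_def, Complex.normSq_apply]
  simp [Complex.sub_re, Complex.sub_im, sq]


/-- The resolvent estimate on the ray `e^{iθ}(ω, ∞)` is equivalent to the resolvent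
estimate on the whole rotated half plane `H_{θ,ω}`, with the bound `1/dist(z, ∂H_{θ,ω})`. -/
theorem resolvent_estimate_ray_iff_halfPlane (A : X →L[ℂ] X) (θ ω : ℝ) :
    (∀ lam : ℝ, ω < lam →
        (Complex.exp ((θ : ℂ) * Complex.I) * (lam : ℂ)) ∈ resolventSet ℂ A ∧
        ‖resolvent A (Complex.exp ((θ : ℂ) * Complex.I) * (lam : ℂ))‖ ≤ 1 / (lam - ω)) ↔
      (∀ z : ℂ, ω < (Complex.exp (-(θ : ℂ) * Complex.I) * z).re →
        z ∈ resolventSet ℂ A ∧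
        ‖resolvent A z‖ ≤ 1 / ((Complex.exp (-(θ : ℂ) * Complex.I) * z).re - ω)) := by
  constructor
  · intro h z hz
    set w : ℂ := Complex.exp (-(θ : ℂ) * Complex.I) * z with hw
    set a : ℝ := w.re with ha'
    set b : ℝ := w.im with hb'
    have ha : ω < a := hz
    have hdist : ∀ lam : ℝ, ‖z - Complex.exp ((θ : ℂ) * Complex.I) * (lam : ℂ)‖
        = Real.sqrt ((a - lam) ^ 2 + b ^ 2) := by
      intro lam
      rw [exp_mul_norm θ z (lam : ℂ), ← hw, norm_sub_ofReal]
    have main : ∀ ε : ℝ, 0 < ε → ε < a - ω →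
        z ∈ resolventSet ℂ A ∧ ‖resolvent A z‖ ≤ (a - ω - ε)⁻¹ := by
      intro ε hε hεa
      set lam : ℝ := a + b ^ 2 / (2 * ε) with hlamdef
      have hba : 0 ≤ b ^ 2 / (2 * ε) := by positivity
      have hlam : ω < lam := by rw [hlamdef]; linarith
      have hdle : Real.sqrt ((a - lam) ^ 2 + b ^ 2) ≤ lam - a + ε := by
        rw [show lam - a + ε = b ^ 2 / (2 * ε) + ε by rw [hlamdef]; ring]
        rw [Real.sqrt_le_iff]
        constructor
        · positivity
        · rw [show a - lam = -(b ^ 2 / (2 * ε)) by rw [hlamdef]; ring]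
          have : (b ^ 2 / (2 * ε)) * (2 * ε) = b ^ 2 := by field_simp
          nlinarith [sq_nonneg ε, sq_nonneg (b ^ 2 / (2 * ε))]
      have hdlt : ‖z - Complex.exp ((θ : ℂ) * Complex.I) * (lam : ℂ)‖ < lam - ω := by
        rw [hdist lam]; linarith
      obtain ⟨h1, h2⟩ := h lam hlam
      have h2' : ‖resolvent A (Complex.exp ((θ : ℂ) * Complex.I) * (lam : ℂ))‖
          ≤ (lam - ω)⁻¹ := by rwa [one_div] at h2
      obtain ⟨hm, hb2⟩ := neumann_step A (M := lam - ω) (by linarith) h1 h2' hdlt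
      refine ⟨hm, le_trans hb2 ?_⟩
      apply inv_anti₀ (by linarith)
      rw [hdist lam] at *
      linarith
    have hmem := (main ((a - ω) / 2) (by linarith) (by linarith)).1
    refine ⟨hmem, ?_⟩
    rw [one_div]
    by_contra hlt
    push_neg at hlt
    set c : ℝ := ‖resolvent A z‖ with hcdef
    have haω : 0 < a - ω := by linarith
    have hc0 : 0 < c := lt_trans (by positivity) hlt
    have hcinv : c⁻¹ < a - ω := by
      have := inv_strictAnti₀ (by positivity : (0:ℝ) < (a - ω)⁻¹) hlt
      rwa [inv_inv] at this
    have hcinv0 : 0 < c⁻¹ := by positivity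
    set ε : ℝ := (a - ω - c⁻¹) / 2 with hεdef
    have h2 := (main ε (by rw [hεdef]; linarith) (by rw [hεdef]; linarith)).2
    have hgt : c⁻¹ < a - ω - ε := by rw [hεdef]; linarith
    have := inv_strictAnti₀ hcinv0 hgt
    rw [inv_inv] at this
    linarith
  · intro h lam hlam
    have hre : (Complex.exp (-(θ : ℂ) * Complex.I)
        * (Complex.exp ((θ : ℂ) * Complex.I) * (lam : ℂ))).re = lam := by
      rw [← mul_assoc, ← Complex.exp_add]
      ring_nf
      simp
    have := h (Complex.exp ((θ : ℂ) * Complex.I) * (lam : ℂ)) (by rw [hre]; exact hlam)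
    rwa [hre] at this
end

section
/- Let X be a nontrivial complex Banach space and A a bounded linear operator on X. Then for all complex numbers α and β, σ_n(α·A + β·I) = {α·z + β : z ∈ σ_n(A)}, i.e. the numerical spectrum of α·A + β·I is the image of σ_n(A) under the affine map z ↦ αz + β. -/
open Complex

variable {X : Type*} [NormedAddCommGroup X] [NormedSpace ℂ X] [CompleteSpace X]

/-- `Ring.inverse` of a nonzero scalar multiple of a unit. -/
lemma ring_inverse_smul_aux {α : ℂ} (hα : α ≠ 0) {u : X →L[ℂ] X} (h : IsUnit u) :
    IsUnit (α • u) ∧ Ring.inverse (α • u) = α⁻¹ • Ring.inverse u := by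
  obtain ⟨v, rfl⟩ := h
  have h1 : (α • (v : X →L[ℂ] X)) * (α⁻¹ • ((v⁻¹ : (X →L[ℂ] X)ˣ) : X →L[ℂ] X)) = 1 := by
    rw [smul_mul_smul_comm, mul_inv_cancel₀ hα, Units.mul_inv, one_smul]
  have h2 : (α⁻¹ • ((v⁻¹ : (X →L[ℂ] X)ˣ) : X →L[ℂ] X)) * (α • (v : X →L[ℂ] X)) = 1 := by
    rw [smul_mul_smul_comm, inv_mul_cancel₀ hα, Units.inv_mul, one_smul]
  refine ⟨⟨⟨_, _, h1, h2⟩, rfl⟩, ?_⟩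
  rw [show α • (v : X →L[ℂ] X) = ((⟨_, _, h1, h2⟩ : (X →L[ℂ] X)ˣ) : X →L[ℂ] X) from rfl,
    Ring.inverse_unit, Ring.inverse_unit]
  rfl

lemma numResolventSet_subset_resolventSet (A : X →L[ℂ] X) :
    numResolventSet A ⊆ resolventSet ℂ A := by
  rintro z ⟨θ, ω, hz, hsub, _⟩
  exact hsub hz

/-- Affine covariance, one direction. -/
lemma mem_numResolventSet_affine {A : X →L[ℂ] X} {α : ℂ} (hα : α ≠ 0) (β : ℂ) {z : ℂ}
    (hz : z ∈ numResolventSet A) :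
    α * z + β ∈ numResolventSet (α • A + β • (1 : X →L[ℂ] X)) := by
  obtain ⟨θ, ω, hzH, hsub, hbd⟩ := hz
  set r : ℝ := ‖α‖ with hr
  have hr0 : 0 < r := norm_pos_iff.mpr hα
  set φ : ℝ := α.arg with hφ
  have key : Complex.exp (-(↑(θ + φ) : ℂ) * I) * α = (r : ℂ) * Complex.exp (-(θ : ℂ) * I) := by
    conv_lhs => rw [← Complex.norm_mul_exp_arg_mul_I α]
    rw [← hr, ← hφ]
    push_cast
    rw [show (-(↑θ + ↑φ) * I : ℂ) = -(θ : ℂ) * I + -((φ : ℂ) * I) by ring, Complex.exp_add,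
      Complex.exp_neg]
    have hne := Complex.exp_ne_zero ((φ : ℂ) * I)
    field_simp
  set ω' : ℝ := r * ω + (Complex.exp (-(↑(θ + φ) : ℂ) * I) * β).re with hω'
  have hre : ∀ w : ℂ, (Complex.exp (-(↑(θ + φ) : ℂ) * I) * (α * w + β)).re - ω'
      = r * ((Complex.exp (-(θ : ℂ) * I) * w).re - ω) := by
    intro w
    have hmul : Complex.exp (-(↑(θ + φ) : ℂ) * I) * (α * w + β)
        = (r : ℂ) * (Complex.exp (-(θ : ℂ) * I) * w)
          + Complex.exp (-(↑(θ + φ) : ℂ) * I) * β := by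
      rw [mul_add]
      congr 1
      rw [← mul_assoc, key, mul_assoc]
    rw [hmul, Complex.add_re, Complex.re_ofReal_mul, hω']
    ring
  have hop : ∀ w' : ℂ, algebraMap ℂ (X →L[ℂ] X) (α * w' + β) - (α • A + β • (1 : X →L[ℂ] X))
      = α • (algebraMap ℂ (X →L[ℂ] X) w' - A) := by
    intro w'
    simp only [Algebra.algebraMap_eq_smul_one]
    rw [smul_sub, add_smul, smul_smul]
    abel
  refine ⟨θ + φ, ω', ?_, ?_, ?_⟩
  · simp only [halfPlane, Set.mem_setOf_eq] at hzH ⊢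
    have h1 : 0 < r * ((Complex.exp (-(θ : ℂ) * I) * z).re - ω) :=
      mul_pos hr0 (by linarith)
    linarith [hre z]
  · intro w hw
    set w' := (w - β) / α with hw'def
    have hww : α * w' + β = w := by rw [hw'def]; field_simp; ring
    have hw'H : w' ∈ halfPlane θ ω := by
      have hwlt : ω' < (Complex.exp (-(↑(θ + φ) : ℂ) * I) * w).re := hw
      have h0 := hre w'
      rw [hww] at h0
      show ω < (Complex.exp (-(θ : ℂ) * I) * w').re
      nlinarith
    have hu : IsUnit (algebraMap ℂ (X →L[ℂ] X) w' - A) :=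
      spectrum.mem_resolventSet_iff.mp (hsub hw'H)
    rw [spectrum.mem_resolventSet_iff, ← hww, hop]
    exact (ring_inverse_smul_aux hα hu).1
  · intro w hw
    set w' := (w - β) / α with hw'def
    have hww : α * w' + β = w := by rw [hw'def]; field_simp; ring
    have hw'H : w' ∈ halfPlane θ ω := by
      have hwlt : ω' < (Complex.exp (-(↑(θ + φ) : ℂ) * I) * w).re := hw
      have h0 := hre w'
      rw [hww] at h0
      show ω < (Complex.exp (-(θ : ℂ) * I) * w').re
      nlinarith
    have hu : IsUnit (algebraMap ℂ (X →L[ℂ] X) w' - A) :=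
      spectrum.mem_resolventSet_iff.mp (hsub hw'H)
    have hres : resolvent (α • A + β • (1 : X →L[ℂ] X)) w = α⁻¹ • resolvent A w' := by
      rw [resolvent, resolvent, ← hww, hop]
      exact (ring_inverse_smul_aux hα hu).2
    have hD0 : 0 < (Complex.exp (-(θ : ℂ) * I) * w').re - ω := by
      have : ω < (Complex.exp (-(θ : ℂ) * I) * w').re := hw'H
      linarith
    have hre' : (Complex.exp (-(↑(θ + φ) : ℂ) * I) * w).re - ω'
        = r * ((Complex.exp (-(θ : ℂ) * I) * w').re - ω) := by
      have h0 := hre w'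
      rw [hww] at h0
      exact h0
    rw [hres, hre', norm_smul α⁻¹ (resolvent A w'), norm_inv, ← hr]
    calc r⁻¹ * ‖resolvent A w'‖
        ≤ r⁻¹ * (1 / ((Complex.exp (-(θ : ℂ) * I) * w').re - ω)) := by
          apply mul_le_mul_of_nonneg_left (hbd w' hw'H) (by positivity)
      _ = 1 / (r * ((Complex.exp (-(θ : ℂ) * I) * w').re - ω)) := by
          rw [one_div, one_div, mul_inv]

lemma numSpectrum_smul_one [Nontrivial X] (β : ℂ) :
    numSpectrum (β • (1 : X →L[ℂ] X)) = {β} := by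
  have hβ1 : β • (1 : X →L[ℂ] X) = algebraMap ℂ (X →L[ℂ] X) β :=
    (Algebra.algebraMap_eq_smul_one β).symm
  have hspec : spectrum ℂ (β • (1 : X →L[ℂ] X)) = {β} := by
    rw [hβ1]; exact spectrum.scalar_eq β
  ext z
  simp only [numSpectrum, Set.mem_compl_iff, Set.mem_singleton_iff]
  constructor
  · intro hz
    by_contra hne
    apply hz
    set θ : ℝ := (z - β).arg with hθ
    set ω : ℝ := (Complex.exp (-(θ : ℂ) * I) * β).re with hω
    have hzβ : z - β ≠ 0 := sub_ne_zero.mpr hne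
    have habs : Complex.exp (-(θ : ℂ) * I) * (z - β) = ((‖z - β‖ : ℝ) : ℂ) := by
      conv_lhs => rw [← Complex.norm_mul_exp_arg_mul_I (z - β)]
      rw [← hθ, ← mul_assoc, mul_comm (Complex.exp _), mul_assoc, ← Complex.exp_add]
      rw [show -(θ : ℂ) * I + (θ : ℂ) * I = 0 by ring, Complex.exp_zero, mul_one]
    have hDabs : ∀ w : ℂ, (Complex.exp (-(θ : ℂ) * I) * w).re - ω
        = (Complex.exp (-(θ : ℂ) * I) * (w - β)).re := by
      intro w
      rw [hω, mul_sub, Complex.sub_re]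
    have hexp1 : ‖Complex.exp (-(θ : ℂ) * I)‖ = 1 := by
      rw [show -(θ : ℂ) * I = ((-θ : ℝ) : ℂ) * I by push_cast; ring]
      exact Complex.norm_exp_ofReal_mul_I (-θ)
    refine ⟨θ, ω, ?_, ?_, ?_⟩
    · simp only [halfPlane, Set.mem_setOf_eq]
      have := hDabs z
      rw [habs, Complex.ofReal_re] at this
      have habspos : 0 < ‖z - β‖ := norm_pos_iff.mpr hzβ
      linarith
    · intro w hw
      simp only [halfPlane, Set.mem_setOf_eq] at hw
      have hD : 0 < (Complex.exp (-(θ : ℂ) * I) * (w - β)).re := by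
        rw [← hDabs w]; linarith
      have hwβ : w ≠ β := by
        intro h
        rw [h, sub_self, mul_zero, Complex.zero_re] at hD
        exact lt_irrefl 0 hD
      rw [← compl_compl (resolventSet ℂ (β • (1 : X →L[ℂ] X)))]
      show w ∈ (spectrum ℂ (β • (1 : X →L[ℂ] X)))ᶜ
      rw [hspec]
      simpa using hwβ
    · intro w hw
      simp only [halfPlane, Set.mem_setOf_eq] at hw
      have hD : 0 < (Complex.exp (-(θ : ℂ) * I) * (w - β)).re := by
        rw [← hDabs w]; linarith
      have hwβ : w - β ≠ 0 := by
        intro h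
        rw [h, mul_zero, Complex.zero_re] at hD
        exact lt_irrefl 0 hD
      have hop : algebraMap ℂ (X →L[ℂ] X) w - β • (1 : X →L[ℂ] X)
          = (w - β) • (1 : X →L[ℂ] X) := by
        rw [Algebra.algebraMap_eq_smul_one, ← sub_smul]
      have hres : resolvent (β • (1 : X →L[ℂ] X)) w = (w - β)⁻¹ • (1 : X →L[ℂ] X) := by
        rw [resolvent, hop, (ring_inverse_smul_aux hwβ isUnit_one).2, Ring.inverse_one]
      have hle : (Complex.exp (-(θ : ℂ) * I) * (w - β)).re ≤ ‖w - β‖ := by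
        calc (Complex.exp (-(θ : ℂ) * I) * (w - β)).re
            ≤ ‖Complex.exp (-(θ : ℂ) * I) * (w - β)‖ := Complex.re_le_norm _
          _ = ‖w - β‖ := by rw [norm_mul, hexp1, one_mul]
      rw [hres, norm_smul (w - β)⁻¹ (1 : X →L[ℂ] X), norm_inv,
        ContinuousLinearMap.one_def,
        ContinuousLinearMap.norm_id, mul_one, hDabs w]
      rw [← one_div]
      exact one_div_le_one_div_of_le hD hle
  · intro hz hmem
    subst hz
    have hmem' : z ∈ resolventSet ℂ (z • (1 : X →L[ℂ] X)) :=
      numResolventSet_subset_resolventSet _ hmem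
    have hzspec : z ∈ spectrum ℂ (z • (1 : X →L[ℂ] X)) := by
      rw [hspec]; exact Set.mem_singleton z
    exact hzspec hmem'

/-- Affine covariance of the numerical spectrum:
`σ_n(α A + β) = α σ_n(A) + β`. -/
theorem numSpectrum_affine [Nontrivial X] (A : X →L[ℂ] X) (α β : ℂ) :
    numSpectrum (α • A + β • (1 : X →L[ℂ] X)) =
      (fun z : ℂ => α * z + β) '' numSpectrum A := by
  rcases eq_or_ne α 0 with rfl | hα
  · rw [zero_smul, zero_add, numSpectrum_smul_one]
    have hne : (numSpectrum A).Nonempty := by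
      obtain ⟨z, hz⟩ := spectrum.nonempty A
      exact ⟨z, fun hmem => hz (numResolventSet_subset_resolventSet A hmem)⟩
    rw [show (fun z : ℂ => 0 * z + β) = fun _ : ℂ => β by funext z; ring]
    exact (Set.Nonempty.image_const hne β).symm
  · have himg : numResolventSet (α • A + β • (1 : X →L[ℂ] X))
        = (fun z : ℂ => α * z + β) '' numResolventSet A := by
      apply Set.Subset.antisymm
      · intro w hw
        refine ⟨(w - β) / α, ?_, by field_simp; ring⟩
        have h0 := mem_numResolventSet_affine (inv_ne_zero hα) (-β / α) hw
        have e1 : α⁻¹ • (α • A + β • (1 : X →L[ℂ] X)) + (-β / α) • (1 : X →L[ℂ] X) = A := by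
          rw [smul_add, smul_smul, inv_mul_cancel₀ hα, one_smul, smul_smul]
          have hc : α⁻¹ * β + -β / α = 0 := by field_simp; ring
          rw [add_assoc, ← add_smul, hc, zero_smul, add_zero]
        have e2 : α⁻¹ * w + -β / α = (w - β) / α := by field_simp; ring
        rw [e1, e2] at h0
        exact h0
      · rintro _ ⟨z, hz, rfl⟩
        exact mem_numResolventSet_affine hα β hz
    have hbij : Function.Bijective (fun z : ℂ => α * z + β) := by
      constructor
      · intro a b h
        simp only at h
        exact mul_left_cancel₀ hα (by linear_combination h)
      · intro w
        exact ⟨(w - β) / α, by field_simp; ring⟩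
    show (numResolventSet (α • A + β • (1 : X →L[ℂ] X)))ᶜ = _
    rw [himg, ← Set.image_compl_eq hbij]
    rfl
end

section
/- Let X be a complex Banach space and A a bounded linear operator on X. Then σ_n(A) = closure(convexHull({j(Ax) : x ∈ X, ‖x‖ = 1, j ∈ J(x)})) ∪ σ_r(A), where σ_r(A) := {λ ∈ ℂ : the range of λ·I − A is not dense in X} is the residual spectrum of A. -/
open Complex

variable {X : Type*} [NormedAddCommGroup X] [NormedSpace ℂ X] [CompleteSpace X]

-- abs of the rotation
lemma abs_rot (θ : ℝ) : ‖Complex.exp (-(θ : ℂ) * Complex.I)‖ = 1 := by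
  rw [show (-(θ : ℂ) * Complex.I) = ((-θ : ℝ) : ℂ) * Complex.I by push_cast; ring]
  exact Complex.norm_exp_ofReal_mul_I _

-- the lower bound from the numerical range condition
lemma lower_bound (A : X →L[ℂ] X) {θ ω : ℝ}
    (hW : ∀ (x : X) (j : X →L[ℂ] ℂ), ‖x‖ = 1 → j ∈ dualitySet x →
      (Complex.exp (-(θ : ℂ) * Complex.I) * j (A x)).re ≤ ω)
    {lam : ℂ} (hlam : lam ∈ halfPlane θ ω) (x : X) :
    ((Complex.exp (-(θ : ℂ) * Complex.I) * lam).re - ω) * ‖x‖ ≤ ‖(lam • (1 : X →L[ℂ] X) - A) x‖ := by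
  set c := Complex.exp (-(θ : ℂ) * Complex.I) with hc
  rcases eq_or_ne x 0 with rfl | hx
  · simp
  · obtain ⟨g, hg1, hgx⟩ := exists_dual_vector ℂ x (norm_ne_zero_iff.mpr hx)
    set y := ((‖x‖:ℂ))⁻¹ • x with hy
    have hnx : (0:ℝ) < ‖x‖ := norm_pos_iff.mpr hx
    have hnxc : ((‖x‖:ℂ)) ≠ 0 := by exact_mod_cast hnx.ne'
    have hny : ‖y‖ = 1 := by
      rw [hy, norm_smul, norm_inv]
      simp only [Complex.norm_real, Real.norm_eq_abs, abs_of_pos hnx]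
      exact inv_mul_cancel₀ hnx.ne'
    have hgy : g y = 1 := by
      rw [hy, map_smul, smul_eq_mul, hgx]; exact inv_mul_cancel₀ hnxc
    have hgmem : g ∈ dualitySet y := by
      constructor
      · rw [hgy, hny]; norm_num
      · rw [hg1, hny]
    have hw := hW y g hny hgmem
    have key : (c * lam).re - ω ≤ ‖(lam • (1 : X →L[ℂ] X) - A) y‖ := by
      have h1 : (c * lam).re - ω ≤ (c * (lam - g (A y))).re := by
        have : (c * (lam - g (A y))).re = (c * lam).re - (c * g (A y)).re := by
          rw [mul_sub, Complex.sub_re]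
        linarith [hw]
      have h2 : (c * (lam - g (A y))).re ≤ ‖c * (lam - g (A y))‖ :=
        Complex.re_le_norm _
      have h3 : ‖c * (lam - g (A y))‖ = ‖lam - g (A y)‖ := by
        rw [norm_mul, abs_rot, one_mul]
      have h4 : lam - g (A y) = g ((lam • (1 : X →L[ℂ] X) - A) y) := by
        simp [map_sub, map_smul, hgy, smul_eq_mul]
      have h5 : ‖g ((lam • (1 : X →L[ℂ] X) - A) y)‖ ≤ ‖(lam • (1 : X →L[ℂ] X) - A) y‖ := by
        calc ‖g ((lam • (1 : X →L[ℂ] X) - A) y)‖ = ‖g ((lam • (1 : X →L[ℂ] X) - A) y)‖ := rfl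
        _ ≤ ‖g‖ * ‖(lam • (1 : X →L[ℂ] X) - A) y‖ := g.le_opNorm _
        _ = ‖(lam • (1 : X →L[ℂ] X) - A) y‖ := by rw [hg1, one_mul]
      calc (c * lam).re - ω ≤ ‖c * (lam - g (A y))‖ := h1.trans h2
        _ = ‖lam - g (A y)‖ := h3
        _ = ‖g ((lam • (1 : X →L[ℂ] X) - A) y)‖ := by rw [h4]
        _ ≤ _ := h5
    have hyx : (lam • (1 : X →L[ℂ] X) - A) y = ((‖x‖:ℂ))⁻¹ • ((lam • (1 : X →L[ℂ] X) - A) x) := by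
      rw [hy, map_smul]
    have : ‖(lam • (1 : X →L[ℂ] X) - A) y‖ = ‖x‖⁻¹ * ‖(lam • (1 : X →L[ℂ] X) - A) x‖ := by
      rw [hyx, norm_smul, norm_inv]
      simp only [Complex.norm_real, Real.norm_eq_abs, abs_of_pos hnx]
    rw [this] at key
    rw [sub_mul] at *
    calc ((c*lam).re) * ‖x‖ - ω * ‖x‖ = (((c*lam).re - ω)) * ‖x‖ := by ring
      _ ≤ (‖x‖⁻¹ * ‖(lam • (1 : X →L[ℂ] X) - A) x‖) * ‖x‖ := by
          apply mul_le_mul_of_nonneg_right key hnx.le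
      _ = ‖(lam • (1 : X →L[ℂ] X) - A) x‖ := by field_simp

lemma algebraMap_sub_eq (A : X →L[ℂ] X) (lam : ℂ) :
    algebraMap ℂ (X →L[ℂ] X) lam - A = lam • (1 : X →L[ℂ] X) - A := by
  rw [Algebra.algebraMap_eq_smul_one]

-- norm bound on resolvent from lower bound
lemma resolvent_norm_le (A : X →L[ℂ] X) {lam : ℂ} {d : ℝ} (hd : 0 < d)
    (hlb : ∀ x : X, d * ‖x‖ ≤ ‖(lam • (1 : X →L[ℂ] X) - A) x‖)
    (hu : IsUnit (algebraMap ℂ (X →L[ℂ] X) lam - A)) :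
    ‖resolvent A lam‖ ≤ 1 / d := by
  apply ContinuousLinearMap.opNorm_le_bound _ (by positivity)
  intro y
  have hid : (algebraMap ℂ (X →L[ℂ] X) lam - A) * resolvent A lam = 1 := by
    have h := hu.unit.mul_inv
    rw [hu.unit_spec] at h
    rw [spectrum.resolvent_eq hu]
    exact h
  have happ : (lam • (1 : X →L[ℂ] X) - A) (resolvent A lam y) = y := by
    have := congrArg (fun T : X →L[ℂ] X => T y) hid
    simpa [ContinuousLinearMap.mul_apply, algebraMap_sub_eq] using this
  have := hlb (resolvent A lam y)
  rw [happ] at this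
  rw [div_mul_eq_mul_div, le_div_iff₀ hd, mul_comm]
  linarith

-- a unit gives dense range
lemma denseRange_of_unit (A : X →L[ℂ] X) {lam : ℂ}
    (hu : IsUnit (algebraMap ℂ (X →L[ℂ] X) lam - A)) :
    DenseRange ⇑(lam • (1 : X →L[ℂ] X) - A) := by
  apply Function.Surjective.denseRange
  intro y
  refine ⟨resolvent A lam y, ?_⟩
  have hid : (algebraMap ℂ (X →L[ℂ] X) lam - A) * resolvent A lam = 1 := by
    have h := hu.unit.mul_inv
    rw [hu.unit_spec] at h
    rw [spectrum.resolvent_eq hu]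
    exact h
  have := congrArg (fun T : X →L[ℂ] X => T y) hid
  simpa [ContinuousLinearMap.mul_apply, algebraMap_sub_eq] using this

-- dense range + lower bound gives a unit
lemma unit_of_denseRange (A : X →L[ℂ] X) {lam : ℂ} {d : ℝ} (hd : 0 < d)
    (hlb : ∀ x : X, d * ‖x‖ ≤ ‖(lam • (1 : X →L[ℂ] X) - A) x‖)
    (hdr : DenseRange ⇑(lam • (1 : X →L[ℂ] X) - A)) :
    IsUnit (algebraMap ℂ (X →L[ℂ] X) lam - A) := by
  set T := lam • (1 : X →L[ℂ] X) - A with hT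
  have hanti : AntilipschitzWith (⟨d⁻¹, by positivity⟩ : NNReal) ⇑T := by
    apply T.antilipschitz_of_bound
    intro x
    change ‖x‖ ≤ d⁻¹ * ‖T x‖
    calc ‖x‖ = d⁻¹ * (d * ‖x‖) := by field_simp
      _ ≤ d⁻¹ * ‖T x‖ := by
          apply mul_le_mul_of_nonneg_left (hlb x) (by positivity)
  have hclosed : IsClosed (Set.range ⇑T) := hanti.isClosed_range T.uniformContinuous
  have hrange : LinearMap.range (T : X →ₗ[ℂ] X) = ⊤ := by
    rw [LinearMap.range_eq_top]
    intro y
    have : y ∈ Set.range ⇑T := by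
      rw [← hclosed.closure_eq]
      exact hdr y
    exact this
  have hker : LinearMap.ker (T : X →ₗ[ℂ] X) = ⊥ := by
    rw [LinearMap.ker_eq_bot]
    exact hanti.injective
  let e : X ≃L[ℂ] X := ContinuousLinearEquiv.ofBijective T hker hrange
  have he : ⇑e = ⇑T := rfl
  rw [algebraMap_sub_eq, ← hT]
  refine ⟨⟨T, e.symm.toContinuousLinearMap, ?_, ?_⟩, rfl⟩
  · ext x
    simp only [ContinuousLinearMap.mul_apply, ContinuousLinearMap.one_apply,
      ContinuousLinearEquiv.coe_coe]
    have : T (e.symm x) = e (e.symm x) := rfl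
    rw [this, e.apply_symm_apply]
  · ext x
    simp only [ContinuousLinearMap.mul_apply, ContinuousLinearMap.one_apply,
      ContinuousLinearEquiv.coe_coe]
    have : T x = e x := rfl
    rw [this, e.symm_apply_apply]

lemma halfPlane_isOpen (θ ω : ℝ) : IsOpen (halfPlane θ ω) :=
  isOpen_lt continuous_const
    (Complex.continuous_re.comp ((continuous_const.mul continuous_id)))

lemma halfPlane_linmap (θ : ℝ) :
    IsLinearMap ℝ (fun z : ℂ => (Complex.exp (-(θ : ℂ) * Complex.I) * z).re) := by
  constructor
  · intro a b; rw [mul_add, Complex.add_re]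
  · intro s a
    have : Complex.exp (-(θ : ℂ) * Complex.I) * (s • a)
        = s • (Complex.exp (-(θ : ℂ) * Complex.I) * a) := by
      rw [Complex.real_smul, Complex.real_smul]; ring
    rw [this, Complex.real_smul, Complex.re_ofReal_mul, smul_eq_mul]

lemma halfPlane_convex (θ ω : ℝ) : Convex ℝ (halfPlane θ ω) :=
  convex_halfSpace_gt (halfPlane_linmap θ) ω

-- auxiliary: the real part function is 1-Lipschitz-ish
lemma rot_re_diff (θ : ℝ) (a b : ℂ) :
    |(Complex.exp (-(θ : ℂ) * Complex.I) * a).re - (Complex.exp (-(θ : ℂ) * Complex.I) * b).re|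
      ≤ ‖a - b‖ := by
  have h1 : (Complex.exp (-(θ : ℂ) * Complex.I) * a).re
      - (Complex.exp (-(θ : ℂ) * Complex.I) * b).re
      = (Complex.exp (-(θ : ℂ) * Complex.I) * (a - b)).re := by
    rw [mul_sub, Complex.sub_re]
  rw [h1]
  calc |(Complex.exp (-(θ : ℂ) * Complex.I) * (a - b)).re|
      ≤ ‖Complex.exp (-(θ : ℂ) * Complex.I) * (a - b)‖ := Complex.abs_re_le_norm _
    _ = ‖a - b‖ := by rw [norm_mul, abs_rot, one_mul]

set_option maxHeartbeats 1000000 in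
lemma halfPlane_subset_resolventSet (A : X →L[ℂ] X) {θ ω : ℝ} {z : ℂ}
    (hz : z ∈ halfPlane θ ω)
    (hzu : IsUnit (algebraMap ℂ (X →L[ℂ] X) z - A))
    (hlb : ∀ lam ∈ halfPlane θ ω, ∀ x : X,
      ((Complex.exp (-(θ : ℂ) * Complex.I) * lam).re - ω) * ‖x‖
        ≤ ‖(lam • (1 : X →L[ℂ] X) - A) x‖) :
    halfPlane θ ω ⊆ resolventSet ℂ A := by
  set c := Complex.exp (-(θ : ℂ) * Complex.I) with hc
  have main : halfPlane θ ω ⊆ halfPlane θ ω ∩ resolventSet ℂ A := by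
    apply IsPreconnected.subset_of_closure_inter_subset
      ((halfPlane_convex θ ω).isPreconnected)
      ((halfPlane_isOpen θ ω).inter (spectrum.isOpen_resolventSet A))
    · exact ⟨z, hz, hz, spectrum.mem_resolventSet_iff.mpr hzu⟩
    · rintro lam ⟨hcl, hlam⟩
      refine ⟨hlam, ?_⟩
      set d := (c * lam).re - ω with hd
      have hdpos : 0 < d := sub_pos.mpr hlam
      -- find a nearby resolvent point
      obtain ⟨mu, hmu, hmud⟩ : ∃ mu ∈ halfPlane θ ω ∩ resolventSet ℂ A,
          ‖lam - mu‖ < d / 2 := by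
        rw [Metric.mem_closure_iff] at hcl
        obtain ⟨mu, hmu, hdist⟩ := hcl (d / 2) (by positivity)
        exact ⟨mu, hmu, by rwa [Complex.dist_eq] at hdist⟩
      obtain ⟨hmuH, hmuR⟩ := hmu
      have hdm : d / 2 < (c * mu).re - ω := by
        have := rot_re_diff θ lam mu
        have h2 := abs_le.mp this
        simp only [← hc] at h2
        linarith [h2.1, hmud]
      have hmuu : IsUnit (algebraMap ℂ (X →L[ℂ] X) mu - A) :=
        spectrum.mem_resolventSet_iff.mp hmuR
      -- resolvent bound at mu
      have hres : ‖resolvent A mu‖ ≤ 1 / ((c * mu).re - ω) :=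
        resolvent_norm_le A (by linarith) (hlb mu hmuH) hmuu
      -- case on triviality
      rcases subsingleton_or_nontrivial (X →L[ℂ] X) with hss | hnt
      · exact spectrum.mem_resolventSet_iff.mpr (isUnit_of_subsingleton _)
      · have hinvnorm : ‖((hmuu.unit⁻¹ : (X →L[ℂ] X)ˣ) : X →L[ℂ] X)‖ ≤ 1 / ((c * mu).re - ω) := by
          rw [← spectrum.resolvent_eq hmuu]; exact hres
        have hinvpos : 0 < ‖((hmuu.unit⁻¹ : (X →L[ℂ] X)ˣ) : X →L[ℂ] X)‖ := by
          rcases eq_or_lt_of_le (norm_nonneg (((hmuu.unit⁻¹ : (X →L[ℂ] X)ˣ) : X →L[ℂ] X))) with h | h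
          · exfalso
            have h0 : ((hmuu.unit⁻¹ : (X →L[ℂ] X)ˣ) : X →L[ℂ] X) = 0 := by
              rw [← norm_eq_zero]; exact h.symm
            have := hmuu.unit.mul_inv
            rw [h0, mul_zero] at this
            exact one_ne_zero this.symm
          · exact h
        have hstep : ((c * mu).re - ω) ≤ ‖((hmuu.unit⁻¹ : (X →L[ℂ] X)ˣ) : X →L[ℂ] X)‖⁻¹ := by
          rw [le_inv_comm₀ (by linarith) hinvpos]
          rwa [one_div] at hinvnorm
        have hnear : ‖(algebraMap ℂ (X →L[ℂ] X) lam - A) - ((hmuu.unit : (X →L[ℂ] X)ˣ) : X →L[ℂ] X)‖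
            < ‖((hmuu.unit⁻¹ : (X →L[ℂ] X)ˣ) : X →L[ℂ] X)‖⁻¹ := by
          rw [hmuu.unit_spec]
          have heq : (algebraMap ℂ (X →L[ℂ] X) lam - A) - (algebraMap ℂ (X →L[ℂ] X) mu - A)
              = (lam - mu) • (1 : X →L[ℂ] X) := by
            rw [algebraMap_sub_eq, algebraMap_sub_eq]
            rw [sub_sub_sub_cancel_right, ← sub_smul]
          rw [heq]
          have hn1 : ‖(lam - mu) • (1 : X →L[ℂ] X)‖ ≤ ‖lam - mu‖ := by
            calc ‖(lam - mu) • (1 : X →L[ℂ] X)‖ ≤ ‖lam - mu‖ * ‖(1 : X →L[ℂ] X)‖ :=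
                  ContinuousLinearMap.opNorm_smul_le _ _
              _ ≤ ‖lam - mu‖ * 1 :=
                  mul_le_mul_of_nonneg_left ContinuousLinearMap.norm_id_le (norm_nonneg _)
              _ = ‖lam - mu‖ := by rw [mul_one]
          calc ‖(lam - mu) • (1 : X →L[ℂ] X)‖ ≤ ‖lam - mu‖ := hn1
            _ < d / 2 := hmud
            _ < (c * mu).re - ω := hdm
            _ ≤ _ := hstep
        exact spectrum.mem_resolventSet_iff.mpr (hmuu.unit.ofNearby _ hnear).isUnit
  intro lam hlam
  exact (main hlam).2

set_option maxHeartbeats 1000000 in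
lemma numrange_re_le (A : X →L[ℂ] X) {θ ω : ℝ}
    (hsub : halfPlane θ ω ⊆ resolventSet ℂ A)
    (hres : ∀ w ∈ halfPlane θ ω,
      ‖resolvent A w‖ ≤ 1 / ((Complex.exp (-(θ : ℂ) * Complex.I) * w).re - ω))
    (x : X) (j : X →L[ℂ] ℂ) (hx : ‖x‖ = 1) (hj : j ∈ dualitySet x) :
    (Complex.exp (-(θ : ℂ) * Complex.I) * j (A x)).re ≤ ω := by
  set c := Complex.exp (-(θ : ℂ) * Complex.I) with hcdef
  obtain ⟨hjx, hjn⟩ := hj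
  rw [hx] at hjn
  have hjx1 : j x = 1 := by rw [hjx, hx]; norm_num
  apply le_of_forall_pos_le_add
  intro ε hε
  set K : ℝ := ω ^ 2 + ‖A‖ ^ 2 + 1 with hK
  have hKpos : 0 < K := by positivity
  set t : ℝ := ε / K with ht
  have htpos : 0 < t := by positivity
  have hKt : (ω ^ 2 + ‖A‖ ^ 2) * t ≤ ε := by
    rw [ht]
    have h1' : (ω ^ 2 + ‖A‖ ^ 2) * (ε / K) ≤ K * (ε / K) := by
      apply mul_le_mul_of_nonneg_right _ (by positivity)
      rw [hK]; linarith
    have h2' : K * (ε / K) = ε := by field_simp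
    linarith
  clear_value t
  set lam : ℂ := Complex.exp ((θ : ℂ) * Complex.I) * ((ω : ℂ) + ((t⁻¹ : ℝ) : ℂ)) with hlam
  have hclam : c * lam = (((ω + t⁻¹ : ℝ)) : ℂ) := by
    rw [hcdef, hlam, ← mul_assoc, ← Complex.exp_add]
    push_cast
    ring_nf
    rw [Complex.exp_zero]
    ring
  have hlamH : lam ∈ halfPlane θ ω := by
    show ω < (c * lam).re
    rw [hclam, Complex.ofReal_re]
    have : 0 < t⁻¹ := by positivity
    linarith
  have hu : IsUnit (algebraMap ℂ (X →L[ℂ] X) lam - A) :=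
    spectrum.mem_resolventSet_iff.mp (hsub hlamH)
  have hRn : ‖resolvent A lam‖ ≤ t := by
    have := hres lam hlamH
    rw [hclam, Complex.ofReal_re] at this
    have heq : ω + t⁻¹ - ω = t⁻¹ := by ring
    rw [heq, one_div, inv_inv] at this
    exact this
  set y : X := resolvent A lam x with hy
  have hyn : ‖y‖ ≤ t := by
    calc ‖y‖ ≤ ‖resolvent A lam‖ * ‖x‖ := (resolvent A lam).le_opNorm x
      _ ≤ t * 1 := by
          apply mul_le_mul hRn (le_of_eq hx) (norm_nonneg _) (le_trans (norm_nonneg _) hRn)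
      _ = t := mul_one t
  have hid : lam • y - A y = x := by
    have hid0 : (algebraMap ℂ (X →L[ℂ] X) lam - A) * resolvent A lam = 1 := by
      have h := hu.unit.mul_inv
      rw [hu.unit_spec] at h
      rw [spectrum.resolvent_eq hu]
      exact h
    have := congrArg (fun T : X →L[ℂ] X => T x) hid0
    simpa [ContinuousLinearMap.mul_apply, algebraMap_sub_eq, hy] using this
  set w : ℂ := j y with hw
  set a : ℂ := j (A y) with ha
  set b : ℂ := j (A (A y)) with hb
  have h1 : lam * w - a = 1 := by
    have := congrArg (fun v => j v) hid
    simpa only [map_sub, map_smul, smul_eq_mul, hjx1] using this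
  have h2 : j (A x) = lam * a - b := by
    have hAx : A x = lam • A y - A (A y) := by
      rw [← hid, map_sub, map_smul]
    rw [hAx, map_sub, map_smul, smul_eq_mul]
  -- scalar estimates
  have hwabs : ‖w‖ ≤ t := by
    calc ‖w‖ = ‖j y‖ := rfl
      _ ≤ ‖j‖ * ‖y‖ := j.le_opNorm y
      _ = ‖y‖ := by rw [hjn, one_mul]
      _ ≤ t := hyn
  have hbabs : ‖b‖ ≤ ‖A‖ ^ 2 * t := by
    calc ‖b‖ = ‖j (A (A y))‖ := rfl
      _ ≤ ‖j‖ * ‖A (A y)‖ := j.le_opNorm _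
      _ = ‖A (A y)‖ := by rw [hjn, one_mul]
      _ ≤ ‖A‖ * ‖A y‖ := A.le_opNorm _
      _ ≤ ‖A‖ * (‖A‖ * ‖y‖) := by
          apply mul_le_mul_of_nonneg_left (A.le_opNorm y) (norm_nonneg _)
      _ = ‖A‖ ^ 2 * ‖y‖ := by ring
      _ ≤ ‖A‖ ^ 2 * t := by
          apply mul_le_mul_of_nonneg_left hyn (by positivity)
  set p : ℝ := (Complex.exp ((θ : ℂ) * Complex.I) * w).re with hp
  have hpt : p ≤ t := by
    have h1' : p ≤ ‖Complex.exp ((θ : ℂ) * Complex.I) * w‖ := Complex.re_le_norm _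
    have h2' : ‖Complex.exp ((θ : ℂ) * Complex.I) * w‖ = ‖w‖ := by
      rw [norm_mul]
      rw [show ((θ : ℂ) * Complex.I) = ((θ : ℝ) : ℂ) * Complex.I by push_cast; ring]
      rw [Complex.norm_exp_ofReal_mul_I, one_mul]
    linarith [hwabs]
  have hlamw : (lam * w).re = (ω + t⁻¹) * p := by
    have : lam * w = (((ω + t⁻¹ : ℝ)) : ℂ) * (Complex.exp ((θ : ℂ) * Complex.I) * w) := by
      rw [hlam]; push_cast; ring
    rw [this, Complex.re_ofReal_mul]
  have hare : a.re = (ω + t⁻¹) * p - 1 := by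
    have : a = lam * w - 1 := by rw [← h1]; ring
    rw [this, Complex.sub_re, Complex.one_re, hlamw]
  -- final computation
  have hgoal : (c * j (A x)).re = (ω + t⁻¹) * a.re - (c * b).re := by
    rw [h2, mul_sub, Complex.sub_re, ← mul_assoc, hclam, Complex.re_ofReal_mul]
  have hcb : -(‖A‖ ^ 2 * t) ≤ (c * b).re := by
    have h1' : |(c * b).re| ≤ ‖c * b‖ := Complex.abs_re_le_norm _
    have h2' : ‖c * b‖ = ‖b‖ := by
      rw [norm_mul, hcdef, abs_rot, one_mul]
    have := abs_le.mp (h1'.trans_eq h2')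
    linarith [this.1, hbabs]
  have hsq : (ω + t⁻¹) ^ 2 * p ≤ (ω + t⁻¹) ^ 2 * t :=
    mul_le_mul_of_nonneg_left hpt (sq_nonneg _)
  have hrw : (ω + t⁻¹) ^ 2 * t - (ω + t⁻¹) + ‖A‖ ^ 2 * t = ω + (ω ^ 2 + ‖A‖ ^ 2) * t := by
    field_simp
    ring
  calc (c * j (A x)).re = (ω + t⁻¹) * a.re - (c * b).re := hgoal
    _ = (ω + t⁻¹) ^ 2 * p - (ω + t⁻¹) - (c * b).re := by rw [hare]; ring
    _ ≤ (ω + t⁻¹) ^ 2 * t - (ω + t⁻¹) + ‖A‖ ^ 2 * t := by linarith [hsq, hcb]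
    _ = ω + (ω ^ 2 + ‖A‖ ^ 2) * t := hrw
    _ ≤ ω + ε := by linarith [hKt]

set_option maxHeartbeats 1000000 in
/-- `σ_n(A)` equals the closed convex hull of the numerical range together with the
residual spectrum. -/
theorem numSpectrum_eq_closure_convexHull_union_residual (A : X →L[ℂ] X) :
    numSpectrum A =
      closure (convexHull ℝ
          {z : ℂ | ∃ x : X, ∃ j ∈ dualitySet x, ‖x‖ = 1 ∧ z = j (A x)}) ∪
        {lam : ℂ | ¬ DenseRange ⇑(lam • (1 : X →L[ℂ] X) - A)} := by
  set W : Set ℂ := {z : ℂ | ∃ x : X, ∃ j ∈ dualitySet x, ‖x‖ = 1 ∧ z = j (A x)} with hW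
  ext z
  simp only [numSpectrum, Set.mem_compl_iff, Set.mem_union, Set.mem_setOf_eq]
  constructor
  · -- z ∉ numResolventSet → z ∈ RHS
    intro h
    by_contra hcon
    push_neg at hcon
    obtain ⟨hz1, hz2⟩ := hcon
    apply h
    -- direction 2 : construct the half plane
    rcases subsingleton_or_nontrivial X with hss | hnt
    · -- trivial space
      haveI : Subsingleton (X →L[ℂ] X) :=
        ⟨fun f g => ContinuousLinearMap.ext fun x => Subsingleton.elim _ _⟩
      refine ⟨0, z.re - 1, ?_, ?_, ?_⟩
      · show z.re - 1 < (Complex.exp (-(0:ℝ) * Complex.I) * z).re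
        simp only [Complex.ofReal_zero, neg_zero, zero_mul, Complex.exp_zero, one_mul]
        linarith
      · intro w _
        exact spectrum.mem_resolventSet_iff.mpr (isUnit_of_subsingleton _)
      · intro w hw
        have : resolvent A w = 0 := Subsingleton.elim _ _
        rw [this, norm_zero]
        have : (0:ℝ) < (Complex.exp (-(0:ℝ) * Complex.I) * w).re - (z.re - 1) :=
          sub_pos.mpr hw
        positivity
    · -- nontrivial space : separation
      have hsconv : Convex ℝ (closure (convexHull ℝ W)) := (convex_convexHull ℝ W).closure
      obtain ⟨f, u, hfs, hfz⟩ :=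
        geometric_hahn_banach_closed_point hsconv isClosed_closure hz1
      -- a point of the numerical range
      obtain ⟨x₀, hx₀⟩ := exists_ne (0 : X)
      set x₁ : X := ((‖x₀‖ : ℂ))⁻¹ • x₀ with hx₁
      have hnx₀ : (0:ℝ) < ‖x₀‖ := norm_pos_iff.mpr hx₀
      have hx₁n : ‖x₁‖ = 1 := by
        rw [hx₁, norm_smul, norm_inv]
        simp only [Complex.norm_real, Real.norm_eq_abs, abs_of_pos hnx₀]
        exact inv_mul_cancel₀ hnx₀.ne'
      have hx₁0 : x₁ ≠ 0 := by
        intro hcontra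
        rw [hcontra, norm_zero] at hx₁n
        norm_num at hx₁n
      obtain ⟨g, hg1, hgx⟩ := exists_dual_vector ℂ x₁ (norm_ne_zero_iff.mpr hx₁0)
      have hgmem : g ∈ dualitySet x₁ := by
        constructor
        · rw [hgx, hx₁n]; norm_num
        · rw [hg1, hx₁n]
      have hw₀ : g (A x₁) ∈ W := ⟨x₁, g, hgmem, hx₁n, rfl⟩
      have hw₀s : g (A x₁) ∈ closure (convexHull ℝ W) :=
        subset_closure (subset_convexHull ℝ W hw₀)
      -- the functional as a complex number
      set g' : ℂ := (f 1 : ℂ) - (f Complex.I : ℂ) * Complex.I with hg'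
      have hg're : g'.re = f 1 := by simp [hg']
      have hg'im : g'.im = -(f Complex.I) := by simp [hg']
      have hfw : ∀ w : ℂ, (g' * w).re = f w := by
        intro w
        have hdecomp : w = w.re • (1:ℂ) + w.im • Complex.I := by
          simp [Complex.real_smul, Complex.re_add_im]
        have : f w = w.re * f 1 + w.im * f Complex.I := by
          conv_lhs => rw [hdecomp]
          rw [map_add, map_smul, map_smul, smul_eq_mul, smul_eq_mul]
        rw [this, Complex.mul_re, hg're, hg'im]
        ring
      have hg'0 : g' ≠ 0 := by
        intro hcontra
        have hf0 : ∀ w : ℂ, f w = 0 := by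
          intro w
          rw [← hfw w, hcontra, zero_mul, Complex.zero_re]
        have h1 := hfs _ hw₀s
        rw [hf0] at h1
        rw [hf0] at hfz
        linarith
      set r : ℝ := ‖g'‖ with hr
      have hr0 : (0:ℝ) < r := by
        rw [hr]
        exact norm_pos_iff.mpr hg'0
      set θ : ℝ := -(Complex.arg g') with hθ
      set ω : ℝ := u / r with hω
      have hc : Complex.exp (-(θ : ℂ) * Complex.I) = g' / (r : ℂ) := by
        have habs := Complex.norm_mul_exp_arg_mul_I g'
        have hrc : ((r:ℝ) : ℂ) ≠ 0 := by exact_mod_cast hr0.ne'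
        rw [hθ]
        push_cast
        rw [neg_neg]
        rw [eq_div_iff hrc, mul_comm]
        exact habs
      have hkey : ∀ w : ℂ, (Complex.exp (-(θ : ℂ) * Complex.I) * w).re = f w / r := by
        intro w
        rw [hc]
        have : g' / (r : ℂ) * w = ((r⁻¹ : ℝ) : ℂ) * (g' * w) := by
          push_cast; ring
        rw [this, Complex.re_ofReal_mul, hfw, inv_mul_eq_div]
      have hzH : z ∈ halfPlane θ ω := by
        show ω < (Complex.exp (-(θ : ℂ) * Complex.I) * z).re
        rw [hkey z, hω]
        gcongr
      have hWle : ∀ (x : X) (j : X →L[ℂ] ℂ), ‖x‖ = 1 → j ∈ dualitySet x →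
          (Complex.exp (-(θ : ℂ) * Complex.I) * j (A x)).re ≤ ω := by
        intro x j hx hj
        rw [hkey, hω]
        have hmem : j (A x) ∈ closure (convexHull ℝ W) :=
          subset_closure (subset_convexHull ℝ W ⟨x, j, hj, hx, rfl⟩)
        have h' := (hfs _ hmem).le
        gcongr
      have hlb' : ∀ lam ∈ halfPlane θ ω, ∀ x : X,
          ((Complex.exp (-(θ : ℂ) * Complex.I) * lam).re - ω) * ‖x‖
            ≤ ‖(lam • (1 : X →L[ℂ] X) - A) x‖ :=
        fun lam hlam x => lower_bound A hWle hlam x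
      have hdz : (0:ℝ) < (Complex.exp (-(θ : ℂ) * Complex.I) * z).re - ω := sub_pos.mpr hzH
      have hzu : IsUnit (algebraMap ℂ (X →L[ℂ] X) z - A) :=
        unit_of_denseRange A hdz (hlb' z hzH) hz2
      have hsub : halfPlane θ ω ⊆ resolventSet ℂ A :=
        halfPlane_subset_resolventSet A hzH hzu hlb'
      refine ⟨θ, ω, hzH, hsub, ?_⟩
      intro w hw
      exact resolvent_norm_le A (sub_pos.mpr hw) (hlb' w hw)
        (spectrum.mem_resolventSet_iff.mp (hsub hw))
  · -- z ∈ RHS → z ∉ numResolventSet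
    rintro h ⟨θ, ω, hzH, hsub, hres⟩
    have hUn : z ∉ closure (convexHull ℝ W) := by
      intro hzU
      set K : Set ℂ := {w : ℂ | (Complex.exp (-(θ : ℂ) * Complex.I) * w).re ≤ ω} with hK
      have hKconv : Convex ℝ K := convex_halfSpace_le (halfPlane_linmap θ) ω
      have hKclosed : IsClosed K :=
        isClosed_le (Complex.continuous_re.comp (continuous_const.mul continuous_id))
          continuous_const
      have hWK : W ⊆ K := by
        rintro w ⟨x, j, hj, hx, rfl⟩
        exact numrange_re_le A hsub hres x j hx hj
      have hcl : closure (convexHull ℝ W) ⊆ K :=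
        closure_minimal (convexHull_min hWK hKconv) hKclosed
      have := hcl hzU
      have hzH' : ω < (Complex.exp (-(θ : ℂ) * Complex.I) * z).re := hzH
      exact absurd this (not_le.mpr hzH')
    have hVn : DenseRange ⇑(z • (1 : X →L[ℂ] X) - A) :=
      denseRange_of_unit A (spectrum.mem_resolventSet_iff.mp (hsub hzH))
    rcases h with h | h
    · exact hUn h
    · exact h hVn
end

section
/- Let X be a complex Banach space and A a bounded linear operator on X. Then σ_n(A) = closure(convexHull({j(Ax) : x ∈ X, ‖x‖ = 1, j ∈ J(x)})). -/
open Complex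

variable {X : Type*} [NormedAddCommGroup X] [NormedSpace ℂ X] [CompleteSpace X]

namespace NumSpecAux

noncomputable abbrev e (θ : ℝ) : ℂ := Complex.exp (-(θ : ℂ) * Complex.I)

lemma abs_e (θ : ℝ) : ‖e θ‖ = 1 := by
  rw [Complex.norm_exp]
  norm_num

lemma e_mul_exp (θ : ℝ) : e θ * Complex.exp ((θ : ℂ) * Complex.I) = 1 := by
  rw [← Complex.exp_add]
  have : -(θ : ℂ) * Complex.I + (θ : ℂ) * Complex.I = 0 := by ring
  rw [this, Complex.exp_zero]

lemma re_e_mul_le (θ : ℝ) (w : ℂ) : (e θ * w).re ≤ ‖w‖ := by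
  calc (e θ * w).re ≤ ‖e θ * w‖ := Complex.re_le_norm _
  _ = ‖w‖ := by rw [norm_mul, abs_e, one_mul]

lemma lip (θ : ℝ) (z w : ℂ) : (e θ * z).re - (e θ * w).re ≤ ‖z - w‖ := by
  have := re_e_mul_le θ (z - w)
  rw [mul_sub, Complex.sub_re] at this
  linarith

lemma norm_lower_bound (A : X →L[ℂ] X) {θ ω : ℝ}
    (hW : ∀ (x : X) (j : X →L[ℂ] ℂ), j ∈ dualitySet x → ‖x‖ = 1 → (e θ * j (A x)).re ≤ ω)
    {z : ℂ} (hz : ω < (e θ * z).re) (x : X) :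
    ((e θ * z).re - ω) * ‖x‖ ≤ ‖z • x - A x‖ := by
  rcases eq_or_ne x 0 with rfl | hx
  · simp
  · have hnx : (0:ℝ) < ‖x‖ := norm_pos_iff.mpr hx
    set u : X := ((‖x‖ : ℂ))⁻¹ • x with hu
    have hun : ‖u‖ = 1 := by
      rw [hu, norm_smul]
      simp [norm_inv, abs_of_pos hnx]
      field_simp
    have hune : u ≠ 0 := by
      intro h; rw [h] at hun; simp at hun
    obtain ⟨j, hj1, hj2⟩ := exists_dual_vector ℂ u (norm_ne_zero_iff.mpr hune)
    have hjd : j ∈ dualitySet u := by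
      constructor
      · rw [hj2, hun]; norm_num
      · rw [hj1, hun]
    have hju : j u = 1 := by rw [hj2, hun]; norm_num
    have key : (e θ * z).re - ω ≤ ‖z • u - A u‖ := by
      have h1 : (e θ * j (A u)).re ≤ ω := hW u j hjd hun
      have h2 : z - j (A u) = j (z • u - A u) := by
        simp [hju]
      have h3 : (e θ * (z - j (A u))).re ≤ ‖z • u - A u‖ := by
        calc (e θ * (z - j (A u))).re ≤ ‖z - j (A u)‖ := re_e_mul_le _ _
        _ = ‖j (z • u - A u)‖ := by rw [h2]
        _ ≤ ‖j‖ * ‖z • u - A u‖ := j.le_opNorm _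
        _ = ‖z • u - A u‖ := by rw [hj1, one_mul]
      rw [mul_sub, Complex.sub_re] at h3
      linarith
    have hsm : z • u - A u = ((‖x‖ : ℂ))⁻¹ • (z • x - A x) := by
      rw [hu, map_smul, smul_comm, smul_sub]
    have hns : ‖z • u - A u‖ = ‖x‖⁻¹ * ‖z • x - A x‖ := by
      rw [hsm, norm_smul]
      simp [abs_of_pos hnx]
    rw [hns] at key
    have hfin := mul_le_mul_of_nonneg_right key hnx.le
    calc ((e θ * z).re - ω) * ‖x‖ ≤ ‖x‖⁻¹ * ‖z • x - A x‖ * ‖x‖ := hfin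
    _ = ‖z • x - A x‖ := by field_simp


lemma alg_apply (z : ℂ) (v : X) : (algebraMap ℂ (X →L[ℂ] X) z) v = z • v := by
  rw [Algebra.algebraMap_eq_smul_one]
  simp

lemma norm_alg_le (z : ℂ) : ‖algebraMap ℂ (X →L[ℂ] X) z‖ ≤ ‖z‖ := by
  rw [Algebra.algebraMap_eq_smul_one, norm_smul]
  calc ‖z‖ * ‖(1 : X →L[ℂ] X)‖ ≤ ‖z‖ * 1 := by
        apply mul_le_mul_of_nonneg_left _ (norm_nonneg z)
        rw [ContinuousLinearMap.one_def]
        exact ContinuousLinearMap.norm_id_le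
  _ = ‖z‖ := by rw [mul_one]

lemma resolvent_norm_le (A : X →L[ℂ] X) {z : ℂ} {d : ℝ} (hd : 0 < d)
    (hlb : ∀ x : X, d * ‖x‖ ≤ ‖z • x - A x‖)
    (hz : z ∈ resolventSet ℂ A) :
    ‖resolvent A z‖ ≤ 1 / d := by
  apply ContinuousLinearMap.opNorm_le_bound _ (by positivity)
  intro y
  have hz' : IsUnit (algebraMap ℂ (X →L[ℂ] X) z - A) := spectrum.mem_resolventSet_iff.mp hz
  have hmul : (algebraMap ℂ (X →L[ℂ] X) z - A) * resolvent A z = 1 :=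
    Ring.mul_inverse_cancel _ hz'
  have happ : z • (resolvent A z y) - A (resolvent A z y) = y := by
    have : ((algebraMap ℂ (X →L[ℂ] X) z - A) * resolvent A z) y = y := by rw [hmul]; simp
    rw [ContinuousLinearMap.mul_apply, ContinuousLinearMap.sub_apply, alg_apply] at this
    exact this
  have := hlb (resolvent A z y)
  rw [happ] at this
  rw [div_mul_eq_mul_div, le_div_iff₀ hd, mul_comm]
  linarith

lemma mem_resolventSet_of_close (A : X →L[ℂ] X) {z₀ z : ℂ}
    (h₀ : z₀ ∈ resolventSet ℂ A)
    (h : ‖resolvent A z₀‖ * ‖z - z₀‖ < 1) :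
    z ∈ resolventSet ℂ A := by
  set a := algebraMap ℂ (X →L[ℂ] X) z₀ - A with ha
  have hau : IsUnit a := spectrum.mem_resolventSet_iff.mp h₀
  set c := resolvent A z₀ * algebraMap ℂ (X →L[ℂ] X) (z - z₀) with hc
  have hcn : ‖c‖ < 1 := by
    calc ‖c‖ ≤ ‖resolvent A z₀‖ * ‖algebraMap ℂ (X →L[ℂ] X) (z - z₀)‖ := norm_mul_le _ _
    _ ≤ ‖resolvent A z₀‖ * ‖z - z₀‖ :=
        mul_le_mul_of_nonneg_left (norm_alg_le _) (norm_nonneg _)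
    _ < 1 := h
  have hunit : IsUnit ((1 : X →L[ℂ] X) + c) := by
    have := (Units.oneSub (-c) (by rwa [norm_neg])).isUnit
    rwa [Units.val_oneSub, sub_neg_eq_add] at this
  have key : algebraMap ℂ (X →L[ℂ] X) z - A = a * (1 + c) := by
    have h1 : a * (1 + c) = a + algebraMap ℂ (X →L[ℂ] X) (z - z₀) := by
      rw [mul_add, mul_one, hc, ← mul_assoc]
      have : a * resolvent A z₀ = 1 := Ring.mul_inverse_cancel _ hau
      rw [this, one_mul]
    rw [h1, map_sub, ha]
    abel
  rw [spectrum.mem_resolventSet_iff, key]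
  exact hau.mul hunit

lemma isOpen_halfPlane (θ ω : ℝ) : IsOpen {z : ℂ | ω < (e θ * z).re} := by
  have : Continuous fun z : ℂ => (e θ * z).re := by
    exact Complex.continuous_re.comp (continuous_const.mul continuous_id)
  exact isOpen_lt continuous_const this

lemma isLinearMap_re_e (θ : ℝ) : IsLinearMap ℝ (fun z : ℂ => (e θ * z).re) := by
  constructor
  · intro x y; rw [mul_add, Complex.add_re]
  · intro r x
    rw [mul_smul_comm, Complex.smul_re]

lemma convex_halfPlane (θ ω : ℝ) : Convex ℝ {z : ℂ | ω < (e θ * z).re} :=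
  convex_halfSpace_gt (isLinearMap_re_e θ) ω


lemma mem_halfPlane_iff {θ ω : ℝ} {z : ℂ} : z ∈ halfPlane θ ω ↔ ω < (e θ * z).re := Iff.rfl

lemma good_of_numRange_le (A : X →L[ℂ] X) {θ ω : ℝ}
    (hW : ∀ (x : X) (j : X →L[ℂ] ℂ), j ∈ dualitySet x → ‖x‖ = 1 → (e θ * j (A x)).re ≤ ω) :
    halfPlane θ ω ⊆ resolventSet ℂ A ∧
      ∀ w ∈ halfPlane θ ω, ‖resolvent A w‖ ≤ 1 / ((e θ * w).re - ω) := by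
  have hbound : ∀ w ∈ halfPlane θ ω, w ∈ resolventSet ℂ A →
      ‖resolvent A w‖ ≤ 1 / ((e θ * w).re - ω) := by
    intro w hw hwρ
    exact resolvent_norm_le A (sub_pos.mpr hw) (norm_lower_bound A hW hw) hwρ
  have hsub : halfPlane θ ω ⊆ resolventSet ℂ A := by
    rcases subsingleton_or_nontrivial X with hX | hX
    · haveI : Subsingleton (X →L[ℂ] X) :=
        ⟨fun f g => ContinuousLinearMap.ext fun x => Subsingleton.elim _ _⟩
      rw [spectrum.resolventSet_of_subsingleton]
      exact Set.subset_univ _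
    · have hconn : IsPreconnected (halfPlane θ ω) := (convex_halfPlane θ ω).isPreconnected
      have hopen : IsOpen (halfPlane θ ω ∩ resolventSet ℂ A) :=
        (isOpen_halfPlane θ ω).inter (spectrum.isOpen_resolventSet A)
      have hne : (halfPlane θ ω ∩ (halfPlane θ ω ∩ resolventSet ℂ A)).Nonempty := by
        set z₀ : ℂ := Complex.exp ((θ : ℂ) * Complex.I) * ((max ω 0 + ‖A‖ + 1 : ℝ) : ℂ) with hz₀
        have hre : (e θ * z₀).re = max ω 0 + ‖A‖ + 1 := by
          rw [hz₀, ← mul_assoc, e_mul_exp, one_mul, Complex.ofReal_re]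
        have hzH : z₀ ∈ halfPlane θ ω := by
          rw [mem_halfPlane_iff, hre]
          have := le_max_left ω 0
          have := norm_nonneg A
          linarith
        have hzρ : z₀ ∈ resolventSet ℂ A := by
          apply spectrum.mem_resolventSet_of_norm_lt
          rw [hz₀, norm_mul, Complex.norm_exp]
          simp only [Complex.mul_re, Complex.ofReal_re, Complex.I_re, Complex.ofReal_im,
            Complex.I_im, mul_zero, mul_one, zero_mul, sub_zero]
          rw [Complex.norm_real, Real.norm_eq_abs]
          have h0 : (0:ℝ) ≤ max ω 0 + ‖A‖ + 1 := by
            have := le_max_right ω 0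
            have := norm_nonneg A
            linarith
          rw [_root_.abs_of_nonneg h0]
          simp only [Complex.ofReal_im, mul_zero, Real.exp_zero, one_mul]
          have := le_max_right ω 0
          linarith
        exact ⟨z₀, hzH, hzH, hzρ⟩
      have hcl : closure (halfPlane θ ω ∩ resolventSet ℂ A) ∩ halfPlane θ ω ⊆
          halfPlane θ ω ∩ resolventSet ℂ A := by
        rintro z ⟨hzc, hzH⟩
        refine ⟨hzH, ?_⟩
        set d : ℝ := (e θ * z).re - ω with hd
        have hdpos : 0 < d := sub_pos.mpr hzH
        rw [Metric.mem_closure_iff] at hzc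
        obtain ⟨w, ⟨hwH, hwρ⟩, hdist⟩ := hzc (d / 2) (by linarith)
        rw [Complex.dist_eq] at hdist
        have hlip := lip θ z w
        have hdw : ‖z - w‖ < (e θ * w).re - ω := by linarith
        have hb := hbound w hwH hwρ
        have hwpos : 0 < (e θ * w).re - ω := sub_pos.mpr hwH
        apply mem_resolventSet_of_close A hwρ
        calc ‖resolvent A w‖ * ‖z - w‖
            ≤ (1 / ((e θ * w).re - ω)) * ‖z - w‖ :=
              mul_le_mul_of_nonneg_right hb (by positivity)
        _ < (1 / ((e θ * w).re - ω)) * ((e θ * w).re - ω) :=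
              mul_lt_mul_of_pos_left hdw (one_div_pos.mpr hwpos)
        _ = 1 := one_div_mul_cancel (ne_of_gt hwpos)
      have := hconn.subset_of_closure_inter_subset hopen hne hcl
      exact fun z hz => (this hz).2
  exact ⟨hsub, fun w hw => hbound w hw (hsub hw)⟩


lemma numRange_le_of_good (A : X →L[ℂ] X) {θ ω : ℝ}
    (hsub : halfPlane θ ω ⊆ resolventSet ℂ A)
    (hres : ∀ w ∈ halfPlane θ ω, ‖resolvent A w‖ ≤ 1 / ((e θ * w).re - ω))
    (x : X) (j : X →L[ℂ] ℂ) (hj : j ∈ dualitySet x) (hx : ‖x‖ = 1) :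
    (e θ * j (A x)).re ≤ ω := by
  by_contra hcon
  push_neg at hcon
  obtain ⟨r, hr⟩ : ∃ r : ℝ, r = (e θ * j (A x)).re := ⟨_, rfl⟩
  rw [← hr] at hcon
  obtain ⟨c, hcdef⟩ : ∃ c : ℝ, c = ‖A‖ ^ 2 := ⟨_, rfl⟩
  have hc0 : 0 ≤ c := by rw [hcdef]; positivity
  have hrω : 0 < r - ω := by linarith
  obtain ⟨t, ht⟩ : ∃ t : ℝ, t = max ((c + r * ω) / (r - ω)) (max ω 0) + 1 := ⟨_, rfl⟩
  have htω : ω < t := by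
    have h1 := le_max_left ω 0
    have h2 := le_max_right ((c + r * ω) / (r - ω)) (max ω 0)
    linarith
  have ht0 : 0 < t := by
    have h1 := le_max_right ω 0
    have h2 := le_max_right ((c + r * ω) / (r - ω)) (max ω 0)
    linarith
  have htkey : c + r * ω < t * (r - ω) := by
    have h1 : (c + r * ω) / (r - ω) < t := by
      have := le_max_left ((c + r * ω) / (r - ω)) (max ω 0)
      linarith
    calc c + r * ω = ((c + r * ω) / (r - ω)) * (r - ω) := by field_simp
    _ < t * (r - ω) := mul_lt_mul_of_pos_right h1 hrω
  obtain ⟨z, hz⟩ : ∃ z : ℂ, z = Complex.exp ((θ : ℂ) * Complex.I) * (t : ℂ) := ⟨_, rfl⟩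
  have htne : (t : ℂ) ≠ 0 := by exact_mod_cast ne_of_gt ht0
  have hez : e θ * z = (t : ℂ) := by rw [hz, ← mul_assoc, e_mul_exp, one_mul]
  have hre : (e θ * z).re = t := by rw [hez, Complex.ofReal_re]
  have hzH : z ∈ halfPlane θ ω := by rw [mem_halfPlane_iff, hre]; exact htω
  have hzρ : z ∈ resolventSet ℂ A := hsub hzH
  have habsz : ‖z‖ = t := by
    rw [hz, norm_mul, Complex.norm_exp]
    simp only [Complex.mul_re, Complex.ofReal_re, Complex.I_re, Complex.ofReal_im,
      Complex.I_im, mul_zero, mul_one, zero_mul, sub_zero, Complex.ofReal_im,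
      Real.exp_zero, one_mul, Complex.norm_real, Real.norm_eq_abs]
    rw [_root_.abs_of_pos ht0]
  -- the vector y
  obtain ⟨y, hy⟩ : ∃ y : X, y = x + (((t : ℂ))⁻¹ * e θ) • A x := ⟨_, rfl⟩
  have hcoef : z * ((t : ℂ)⁻¹ * e θ) = 1 := by
    calc z * ((t : ℂ)⁻¹ * e θ)
        = (e θ * Complex.exp ((θ : ℂ) * Complex.I)) * ((t : ℂ) * (t : ℂ)⁻¹) := by rw [hz]; ring
    _ = 1 := by rw [e_mul_exp, mul_inv_cancel₀ htne, one_mul]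
  have hkey : z • y - A y = z • x - (((t : ℂ))⁻¹ * e θ) • A (A x) := by
    rw [hy, smul_add, map_add, map_smul]
    rw [smul_smul, hcoef, one_smul]
    abel
  have hnorm1 : ‖z • y - A y‖ ≤ t + t⁻¹ * c := by
    rw [hkey]
    calc ‖z • x - (((t : ℂ))⁻¹ * e θ) • A (A x)‖
        ≤ ‖z • x‖ + ‖(((t : ℂ))⁻¹ * e θ) • A (A x)‖ := norm_sub_le _ _
    _ ≤ t + t⁻¹ * c := by
        apply add_le_add
        · rw [norm_smul, habsz, hx, mul_one]
        · rw [norm_smul, norm_mul, abs_e, mul_one, norm_inv,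
            Complex.norm_real, Real.norm_eq_abs, _root_.abs_of_pos ht0]
          apply mul_le_mul_of_nonneg_left _ (by positivity)
          calc ‖A (A x)‖ ≤ ‖A‖ * ‖A x‖ := A.le_opNorm _
          _ ≤ ‖A‖ * (‖A‖ * ‖x‖) :=
              mul_le_mul_of_nonneg_left (A.le_opNorm _) (norm_nonneg _)
          _ = c := by rw [hx, mul_one, hcdef]; ring
  have hyR : y = resolvent A z (z • y - A y) := by
    have hz' : IsUnit (algebraMap ℂ (X →L[ℂ] X) z - A) := spectrum.mem_resolventSet_iff.mp hzρ
    have hmul : resolvent A z * (algebraMap ℂ (X →L[ℂ] X) z - A) = 1 :=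
      Ring.inverse_mul_cancel _ hz'
    have : (resolvent A z * (algebraMap ℂ (X →L[ℂ] X) z - A)) y = y := by rw [hmul]; simp
    rw [ContinuousLinearMap.mul_apply, ContinuousLinearMap.sub_apply, alg_apply] at this
    exact this.symm
  have hnormy : ‖y‖ ≤ (t + t⁻¹ * c) / (t - ω) := by
    rw [hyR]
    calc ‖resolvent A z (z • y - A y)‖ ≤ ‖resolvent A z‖ * ‖z • y - A y‖ :=
          (resolvent A z).le_opNorm _
    _ ≤ (1 / ((e θ * z).re - ω)) * (t + t⁻¹ * c) := by
        apply mul_le_mul (hres z hzH) hnorm1 (norm_nonneg _)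
        have : 0 < (e θ * z).re - ω := by rw [hre]; linarith
        positivity
    _ = (t + t⁻¹ * c) / (t - ω) := by rw [hre]; ring
  have hjy : (1 : ℝ) + t⁻¹ * r ≤ ‖y‖ := by
    have hjx : j x = 1 := by
      have := hj.1
      rw [hx] at this
      simpa using this
    have hj1 : ‖j‖ = 1 := by rw [hj.2, hx]
    have hjy2 : j y = 1 + (t : ℂ)⁻¹ * (e θ * j (A x)) := by
      rw [hy, map_add, map_smul, hjx, smul_eq_mul]
      ring
    have hreujy : (j y).re = 1 + t⁻¹ * r := by
      rw [hjy2]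
      have : ((t : ℂ))⁻¹ = ((t⁻¹ : ℝ) : ℂ) := by push_cast; ring
      rw [this, Complex.add_re, Complex.one_re]
      congr 1
      rw [← Complex.real_smul, Complex.smul_re, hr, smul_eq_mul]
    calc (1 : ℝ) + t⁻¹ * r = (j y).re := hreujy.symm
    _ ≤ ‖j y‖ := Complex.re_le_norm _
    _ = ‖j y‖ := rfl
    _ ≤ ‖j‖ * ‖y‖ := j.le_opNorm _
    _ = ‖y‖ := by rw [hj1, one_mul]
  have hfinal : (1 + t⁻¹ * r) * (t * (t - ω)) ≤ ((t + t⁻¹ * c) / (t - ω)) * (t * (t - ω)) := by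
    apply mul_le_mul_of_nonneg_right (le_trans hjy hnormy)
    have : 0 < t - ω := by linarith
    positivity
  have htsub : 0 < t - ω := by linarith
  have hexp : ((t + t⁻¹ * c) / (t - ω)) * (t * (t - ω)) = t * t + c := by
    field_simp
    try ring
  have hexp2 : (1 + t⁻¹ * r) * (t * (t - ω)) = (t + r) * (t - ω) := by
    field_simp
    try ring
  rw [hexp, hexp2] at hfinal
  nlinarith [hfinal, htkey]

end NumSpecAux

/-- For a bounded operator, `σ_n(A)` equals the closed convex hull of the numerical range. -/
theorem numSpectrum_eq_closure_convexHull (A : X →L[ℂ] X) :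
    numSpectrum A =
      closure (convexHull ℝ
        {z : ℂ | ∃ x : X, ∃ j ∈ dualitySet x, ‖x‖ = 1 ∧ z = j (A x)}) := by
  classical
  set W : Set ℂ := {z : ℂ | ∃ x : X, ∃ j ∈ dualitySet x, ‖x‖ = 1 ∧ z = j (A x)} with hWdef
  apply Set.eq_of_subset_of_subset
  · -- numSpectrum ⊆ closure (convexHull W)
    intro z hz
    rw [numSpectrum, Set.mem_compl_iff] at hz
    by_contra hzc
    apply hz
    have hsep : ∃ θ ω : ℝ, ω < (NumSpecAux.e θ * z).re ∧
        ∀ w ∈ W, (NumSpecAux.e θ * w).re ≤ ω := by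
      rcases Set.eq_empty_or_nonempty (closure (convexHull ℝ W)) with hemp | hne
      · refine ⟨0, z.re - 1, ?_, ?_⟩
        · simp [NumSpecAux.e]
        · intro w hw
          exfalso
          have : w ∈ closure (convexHull ℝ W) := subset_closure (subset_convexHull ℝ W hw)
          rw [hemp] at this
          exact this
      · obtain ⟨f, u, hfs, hfz⟩ := geometric_hahn_banach_closed_point
          ((convex_convexHull ℝ W).closure) isClosed_closure hzc
        obtain ⟨a, haf⟩ : ∃ a : ℝ, a = f 1 := ⟨_, rfl⟩
        obtain ⟨b, hbf⟩ : ∃ b : ℝ, b = f Complex.I := ⟨_, rfl⟩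
        have hfw : ∀ w : ℂ, f w = a * w.re + b * w.im := by
          intro w
          have hw : (w.re : ℝ) • (1 : ℂ) + (w.im : ℝ) • Complex.I = w := by
            rw [Complex.real_smul, Complex.real_smul, mul_one, Complex.re_add_im]
          calc f w = f ((w.re : ℝ) • (1 : ℂ) + (w.im : ℝ) • Complex.I) := by rw [hw]
          _ = w.re • f 1 + w.im • f Complex.I := by rw [map_add, map_smul, map_smul]
          _ = a * w.re + b * w.im := by rw [← haf, ← hbf, smul_eq_mul, smul_eq_mul]; ring
        obtain ⟨c, hcdef⟩ : ∃ c : ℂ, c = (a : ℂ) - (b : ℂ) * Complex.I := ⟨_, rfl⟩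
        have hcre : c.re = a := by rw [hcdef]; simp
        have hcim : c.im = -b := by rw [hcdef]; simp
        have hcw : ∀ w : ℂ, (c * w).re = f w := by
          intro w
          rw [Complex.mul_re, hcre, hcim, hfw w]
          ring
        have hc0 : c ≠ 0 := by
          intro h
          have ha : a = 0 := by rw [← hcre, h]; simp
          have hb : b = 0 := by
            have h5 := hcim
            rw [h] at h5
            simp only [Complex.zero_im] at h5
            linarith
          obtain ⟨w₀, hw₀⟩ := hne
          have h1 := hfs w₀ hw₀
          rw [hfw w₀, ha, hb] at h1
          rw [hfw z, ha, hb] at hfz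
          simp at h1 hfz
          linarith
        have habs : 0 < ‖c‖ := norm_pos_iff.mpr hc0
        have habsne : ((‖c‖ : ℝ) : ℂ) ≠ 0 := by exact_mod_cast habs.ne'
        have he : NumSpecAux.e (-(Complex.arg c)) = c / (‖c‖ : ℂ) := by
          have h1 : (-((-(Complex.arg c) : ℝ) : ℂ)) = ((Complex.arg c : ℝ) : ℂ) := by
            push_cast; ring
          rw [NumSpecAux.e, h1, eq_div_iff habsne]
          have h2 := Complex.norm_mul_exp_arg_mul_I c
          linear_combination h2
        have hre : ∀ w : ℂ, (NumSpecAux.e (-(Complex.arg c)) * w).re =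
            f w / ‖c‖ := by
          intro w
          have h3 : NumSpecAux.e (-(Complex.arg c)) * w
              = ((‖c‖)⁻¹ : ℝ) • (c * w) := by
            rw [he, Complex.real_smul, Complex.ofReal_inv]
            ring
          rw [h3, Complex.smul_re, hcw w, smul_eq_mul]
          ring
        refine ⟨-(Complex.arg c), u / ‖c‖, ?_, ?_⟩
        · rw [hre z]
          exact (div_lt_div_iff_of_pos_right habs).mpr hfz
        · intro w hw
          rw [hre w]
          have : w ∈ closure (convexHull ℝ W) := subset_closure (subset_convexHull ℝ W hw)
          exact (div_le_div_iff_of_pos_right habs).mpr (hfs w this).le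
    obtain ⟨θ, ω, hzH, hW⟩ := hsep
    have hgood := NumSpecAux.good_of_numRange_le A
      (fun x j hj hx => hW (j (A x)) ⟨x, j, hj, hx, rfl⟩)
    exact ⟨θ, ω, hzH, hgood.1, hgood.2⟩
  · intro z hz
    rw [numSpectrum, Set.mem_compl_iff]
    intro hmem
    obtain ⟨θ, ω, hzH, hsub, hres⟩ := hmem
    have hW : W ⊆ {w : ℂ | (NumSpecAux.e θ * w).re ≤ ω} := by
      rintro w ⟨x, j, hj, hx, rfl⟩
      exact NumSpecAux.numRange_le_of_good A hsub hres x j hj hx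
    have hCc : Convex ℝ {w : ℂ | (NumSpecAux.e θ * w).re ≤ ω} :=
      convex_halfSpace_le (NumSpecAux.isLinearMap_re_e θ) ω
    have hCcl : IsClosed {w : ℂ | (NumSpecAux.e θ * w).re ≤ ω} := by
      apply isClosed_le _ continuous_const
      exact Complex.continuous_re.comp (continuous_const.mul continuous_id)
    have hle := closure_minimal (convexHull_min hW hCc) hCcl hz
    exact absurd (NumSpecAux.mem_halfPlane_iff.mp hzH) (not_lt.mpr hle)
end

section
/- Let H be a complex Hilbert space and A a bounded linear operator on H. Then σ_n(A) = closure({⟨Ax, x⟩ : x ∈ H, ‖x‖ = 1}), the closure of the numerical range W(A) of A, where ⟨Ax, x⟩ denotes the inner product of Ax with x (linear in the first entry). -/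
open Complex

variable {X : Type*} [NormedAddCommGroup X] [NormedSpace ℂ X] [CompleteSpace X]

section Aux

set_option linter.unusedSectionVars false
set_option maxHeartbeats 1000000

variable {H : Type*} [NormedAddCommGroup H] [InnerProductSpace ℂ H] [CompleteSpace H]

local notation "⟪" x ", " y "⟫" => (inner ℂ x y : ℂ)

omit [CompleteSpace H] in
lemma norm_le_of_inner_bound' (T : H →L[ℂ] H) (d : ℝ)
    (h : ∀ x : H, d * ‖x‖ ^ 2 ≤ ‖⟪x, T x⟫‖) (x : H) : d * ‖x‖ ≤ ‖T x‖ := by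
  rcases eq_or_ne x 0 with rfl | hx
  · simp
  · have hn : (0:ℝ) < ‖x‖ := norm_pos_iff.mpr hx
    have h1 := h x
    have h2 : ‖⟪x, T x⟫‖ ≤ ‖x‖ * ‖T x‖ := norm_inner_le_norm x (T x)
    have := h1.trans h2
    rw [pow_two] at this
    nlinarith

omit [CompleteSpace H] in
lemma inner_sub_op' (A : H →L[ℂ] H) (z : ℂ) (x : H) :
    ⟪x, (algebraMap ℂ (H →L[ℂ] H) z - A) x⟫ = z * (‖x‖:ℂ) ^ 2 - ⟪x, A x⟫ := by
  rw [Algebra.algebraMap_eq_smul_one]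
  simp [inner_sub_right, inner_smul_right, inner_self_eq_norm_sq_to_K]

omit [CompleteSpace H] in
lemma inner_bound_of_unit' (A : H →L[ℂ] H) (z : ℂ) (d : ℝ) (hd : 0 ≤ d)
    (h : ∀ x : H, ‖x‖ = 1 → d ≤ ‖z - ⟪x, A x⟫‖) (x : H) :
    d * ‖x‖ ^ 2 ≤ ‖⟪x, (algebraMap ℂ (H →L[ℂ] H) z - A) x⟫‖ := by
  rcases eq_or_ne x 0 with rfl | hx
  · simp
  · have hn : (0:ℝ) < ‖x‖ := norm_pos_iff.mpr hx
    set u : H := ((‖x‖⁻¹ : ℝ) : ℂ) • x with hu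
    have hun : ‖u‖ = 1 := by
      rw [hu, norm_smul]
      simp [abs_of_pos (inv_pos.mpr hn), inv_mul_cancel₀ hn.ne']
    have key := h u hun
    have hinner : z - ⟪u, A u⟫ = ((‖x‖ ^ 2)⁻¹ : ℝ) * ⟪x, (algebraMap ℂ (H →L[ℂ] H) z - A) x⟫ := by
      rw [inner_sub_op']
      have : ⟪u, A u⟫ = ((‖x‖ ^ 2)⁻¹ : ℝ) * ⟪x, A x⟫ := by
        rw [hu, map_smul, inner_smul_left, inner_smul_right, Complex.conj_ofReal]
        push_cast
        ring
      rw [this]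
      have hx2 : ((‖x‖:ℂ)) ^ 2 ≠ 0 := by
        simpa using hn.ne'
      push_cast
      field_simp
      rw [sub_div, mul_div_cancel_right₀ _ hx2]
    rw [hinner] at key
    rw [norm_mul] at key
    have h3 : ‖(((‖x‖ ^ 2)⁻¹ : ℝ) : ℂ)‖ = (‖x‖ ^ 2)⁻¹ := by
      simp [abs_of_pos (by positivity : (0:ℝ) < (‖x‖ ^ 2)⁻¹)]
    rw [h3] at key
    have hx2 : (0:ℝ) < ‖x‖ ^ 2 := by positivity
    calc d * ‖x‖ ^ 2 ≤ ((‖x‖ ^ 2)⁻¹ * ‖⟪x, (algebraMap ℂ (H →L[ℂ] H) z - A) x⟫‖) * ‖x‖ ^ 2 := by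
          nlinarith
      _ = ‖⟪x, (algebraMap ℂ (H →L[ℂ] H) z - A) x⟫‖ := by field_simp

/-- The key resolvent estimate: if `z` is at distance at least `d` from every point of the
numerical range, then `z` is in the resolvent set with `‖R(z,A)‖ ≤ 1/d`. -/
lemma key_resolvent (A : H →L[ℂ] H) (z : ℂ) (d : ℝ) (hd : 0 < d)
    (h : ∀ x : H, ‖x‖ = 1 → d ≤ ‖z - ⟪x, A x⟫‖) :
    z ∈ resolventSet ℂ A ∧ ‖resolvent A z‖ ≤ 1 / d := by
  set T : H →L[ℂ] H := algebraMap ℂ (H →L[ℂ] H) z - A with hT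
  have hTb : ∀ x : H, d * ‖x‖ ≤ ‖T x‖ :=
    norm_le_of_inner_bound' T d (inner_bound_of_unit' A z d hd.le h)
  set T' := ContinuousLinearMap.adjoint T with hT'
  have hT'inner : ∀ x : H, ‖⟪x, T' x⟫‖ = ‖⟪x, T x⟫‖ := by
    intro x
    rw [hT', ContinuousLinearMap.adjoint_inner_right, ← inner_conj_symm]
    exact RCLike.norm_conj _
  have hT'b : ∀ x : H, d * ‖x‖ ≤ ‖T' x‖ := by
    refine norm_le_of_inner_bound' T' d (fun x => ?_)
    rw [hT'inner]
    exact inner_bound_of_unit' A z d hd.le h x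
  have hanti : AntilipschitzWith ⟨d⁻¹, by positivity⟩ T := by
    refine ContinuousLinearMap.antilipschitz_of_bound T (fun x => ?_)
    have := hTb x
    change ‖x‖ ≤ d⁻¹ * ‖T x‖
    rw [← div_eq_inv_mul, le_div_iff₀ hd]
    nlinarith [this]
  have hdense : (LinearMap.range (T : H →ₗ[ℂ] H)).topologicalClosure = ⊤ := by
    rw [Submodule.topologicalClosure_eq_top_iff]
    rw [Submodule.eq_bot_iff]
    intro y hy
    have hTy : T' y = 0 := by
      rw [← inner_self_eq_zero (𝕜 := ℂ) (x := T' y)]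
      rw [hT', ContinuousLinearMap.adjoint_inner_left]
      rw [← inner_conj_symm]
      have : ⟪T (ContinuousLinearMap.adjoint T y), y⟫ = 0 :=
        hy _ ⟨_, rfl⟩
      rw [this, map_zero]
    have := hT'b y
    rw [hTy, norm_zero] at this
    have : ‖y‖ ≤ 0 := by nlinarith
    exact norm_le_zero_iff.mp this
  have hbij : Function.Bijective T :=
    (T.bijective_iff_dense_range_and_antilipschitz).mpr ⟨hdense, ⟨_, hanti⟩⟩
  have hunit : IsUnit T := ContinuousLinearMap.isUnit_iff_bijective.mpr hbij
  refine ⟨hunit, ?_⟩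
  have hres : resolvent A z = Ring.inverse T := rfl
  have hmul : T * Ring.inverse T = 1 := Ring.mul_inverse_cancel T hunit
  rw [hres]
  refine ContinuousLinearMap.opNorm_le_bound _ (by positivity) (fun y => ?_)
  have h1 : T (Ring.inverse T y) = y := by
    calc T (Ring.inverse T y) = (T * Ring.inverse T) y := rfl
      _ = y := by rw [hmul]; rfl
  have := hTb (Ring.inverse T y)
  rw [h1] at this
  rw [div_mul_eq_mul_div, le_div_iff₀ hd]
  nlinarith [this]

omit [CompleteSpace H] in
/-- The heart of the Toeplitz–Hausdorff theorem. -/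
lemma exists_unit_inner_eq (B : H →L[ℂ] H) {x y : H} (hx : ‖x‖ = 1) (hy : ‖y‖ = 1)
    (hgx : ⟪x, B x⟫ = 1) (hgy : ⟪y, B y⟫ = 0) {a : ℝ} (ha : a ∈ Set.Icc (0:ℝ) 1) :
    ∃ u : H, ‖u‖ = 1 ∧ ⟪u, B u⟫ = (a : ℂ) := by
  classical
  set p : ℂ := ⟪x, B y⟫ with hp
  set q : ℂ := ⟪y, B x⟫ with hq
  set h : ℝ → ℝ := fun α => (Complex.exp (-(α:ℂ) * I) * p + Complex.exp ((α:ℂ) * I) * q).im with hh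
  have hcont : Continuous h := by
    apply Complex.continuous_im.comp
    fun_prop
  have hpi : h Real.pi = - h 0 := by
    simp only [hh]
    have h1 : Complex.exp (-(Real.pi:ℂ) * I) = -1 := by
      rw [neg_mul, Complex.exp_neg, Complex.exp_pi_mul_I]
      norm_num
    have h2 : Complex.exp ((Real.pi:ℂ) * I) = -1 := Complex.exp_pi_mul_I
    rw [h1, h2]
    simp
    ring
  obtain ⟨α, _, hα⟩ : ∃ α ∈ Set.Icc 0 Real.pi, h α = 0 := by
    rcases le_total (h 0) 0 with h0 | h0
    · have : (0:ℝ) ∈ Set.Icc (h 0) (h Real.pi) := ⟨h0, by rw [hpi]; linarith⟩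
      obtain ⟨α, hmem, hval⟩ := intermediate_value_Icc Real.pi_pos.le hcont.continuousOn this
      exact ⟨α, hmem, hval⟩
    · have : (0:ℝ) ∈ Set.Icc (h Real.pi) (h 0) := ⟨by rw [hpi]; linarith, h0⟩
      obtain ⟨α, hmem, hval⟩ := intermediate_value_Icc' Real.pi_pos.le hcont.continuousOn this
      exact ⟨α, hmem, hval⟩
  set e : ℂ := Complex.exp ((α:ℂ) * I) with he
  have hee : Complex.exp (-(α:ℂ) * I) * e = 1 := by
    rw [he, ← Complex.exp_add]; ring_nf; exact Complex.exp_zero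
  have hconj : (starRingEnd ℂ) e = Complex.exp (-(α:ℂ) * I) := by
    rw [he, ← Complex.exp_conj]
    congr 1
    simp [map_mul, Complex.conj_ofReal, Complex.conj_I]
  set x' : H := e • x with hx'def
  have hx' : ‖x'‖ = 1 := by
    rw [hx'def, norm_smul, hx, mul_one, he]
    simp [Complex.norm_exp]
  have hgx' : ⟪x', B x'⟫ = 1 := by
    rw [hx'def, map_smul, inner_smul_left, inner_smul_right, hconj, ← mul_assoc, hee, one_mul, hgx]
  set p' : ℂ := ⟪x', B y⟫ with hp'
  set q' : ℂ := ⟪y, B x'⟫ with hq'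
  have hp'e : p' = Complex.exp (-(α:ℂ) * I) * p := by
    rw [hp', hx'def, inner_smul_left, hconj, hp]
  have hq'e : q' = e * q := by
    rw [hq', hx'def, map_smul, inner_smul_right, hq]
  have him : (p' + q').im = 0 := by rw [hp'e, hq'e]; exact hα
  set r : ℝ := (p' + q').re with hr
  have hpq : p' + q' = (r : ℂ) := Complex.ext (by simp [hr]) (by simp [him])
  set v : ℝ → H := fun t => ((t:ℝ):ℂ) • x' + ((1 - t : ℝ):ℂ) • y with hv
  have hvinner : ∀ t : ℝ, ⟪v t, B (v t)⟫ = ((t^2 + t*(1-t)*r : ℝ) : ℂ) := by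
    intro t
    have hexp : ⟪v t, B (v t)⟫
        = ((t:ℝ):ℂ)^2 * ⟪x', B x'⟫ + ((t:ℝ):ℂ) * ((1-t:ℝ):ℂ) * (p' + q')
          + ((1-t:ℝ):ℂ)^2 * ⟪y, B y⟫ := by
      simp only [hv, map_add, map_smul, inner_add_left, inner_add_right,
        inner_smul_left, inner_smul_right, Complex.conj_ofReal, hp', hq']
      ring
    rw [hexp, hgx', hgy, hpq]
    push_cast
    ring
  have hvne : ∀ t ∈ Set.Icc (0:ℝ) 1, v t ≠ 0 := by
    rintro t ⟨ht0, ht1⟩ h0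
    have heq : ((t:ℝ):ℂ) • x' = -(((1 - t : ℝ):ℂ) • y) := by
      rw [eq_neg_iff_add_eq_zero]; exact h0
    have hnrm : |t| = |1 - t| := by
      have h1 : ‖((t:ℝ):ℂ)‖ * ‖x'‖ = ‖((1 - t:ℝ):ℂ)‖ * ‖y‖ := by
        rw [← norm_smul, ← norm_smul, heq, norm_neg]
      rw [hx', hy, mul_one, mul_one, Complex.norm_real, Complex.norm_real,
        Real.norm_eq_abs, Real.norm_eq_abs] at h1
      exact h1
    have ht : t = 1/2 := by
      rw [_root_.abs_of_nonneg ht0, _root_.abs_of_nonneg (by linarith : (0:ℝ) ≤ 1 - t)] at hnrm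
      linarith
    rw [ht] at heq
    have h12 : ((1:ℝ) - 1/2 : ℝ) = (1/2 : ℝ) := by norm_num
    rw [h12] at heq
    have hxy : x' = -y := by
      have h2 : (((1:ℝ)/2 : ℝ):ℂ) ≠ 0 := by norm_num
      exact smul_right_injective H h2 (heq.trans (smul_neg _ _).symm)
    rw [hxy] at hgx'
    rw [map_neg, inner_neg_neg, hgy] at hgx'
    exact one_ne_zero hgx'.symm
  set ψ : ℝ → ℝ := fun t => (‖v t‖ ^ 2)⁻¹ * (t^2 + t*(1-t)*r) with hψ
  have hvcont : Continuous v := by fun_prop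
  have hψcont : ContinuousOn ψ (Set.Icc 0 1) := by
    apply ContinuousOn.mul
    · apply ContinuousOn.inv₀
      · fun_prop
      · intro t ht
        exact pow_ne_zero 2 (norm_ne_zero_iff.mpr (hvne t ht))
    · fun_prop
  have hψ0 : ψ 0 = 0 := by simp [hψ]
  have hψ1 : ψ 1 = 1 := by
    have hv1 : v 1 = x' := by simp [hv]
    simp [hψ, hv1, hx']
  obtain ⟨t, htmem, htval⟩ : ∃ t ∈ Set.Icc (0:ℝ) 1, ψ t = a := by
    have : a ∈ Set.Icc (ψ 0) (ψ 1) := by rw [hψ0, hψ1]; exact ha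
    obtain ⟨t, hmem, hval⟩ := intermediate_value_Icc (by norm_num : (0:ℝ) ≤ 1) hψcont this
    exact ⟨t, hmem, hval⟩
  have hvtn : (0:ℝ) < ‖v t‖ := norm_pos_iff.mpr (hvne t htmem)
  refine ⟨((‖v t‖⁻¹ : ℝ):ℂ) • v t, ?_, ?_⟩
  · rw [norm_smul]
    simp [abs_of_pos (inv_pos.mpr hvtn), inv_mul_cancel₀ hvtn.ne']
  · rw [map_smul, inner_smul_left, inner_smul_right, Complex.conj_ofReal, hvinner t, ← htval, hψ]
    push_cast
    ring

omit [CompleteSpace H] in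
/-- Toeplitz–Hausdorff: the numerical range is convex. -/
lemma convex_numRange (A : H →L[ℂ] H) :
    Convex ℝ {z : ℂ | ∃ x : H, ‖x‖ = 1 ∧ z = ⟪x, A x⟫} := by
  rintro w1 ⟨x, hx, rfl⟩ w2 ⟨y, hy, rfl⟩ a b ha hb hab
  rcases eq_or_ne (⟪x, A x⟫ : ℂ) (⟪y, A y⟫ : ℂ) with heq | hne
  · exact ⟨x, hx, by rw [heq, Convex.combo_self hab, ← heq]⟩
  · set w1 : ℂ := ⟪x, A x⟫ with hw1
    set w2 : ℂ := ⟪y, A y⟫ with hw2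
    have hd : w1 - w2 ≠ 0 := sub_ne_zero.mpr hne
    set B : H →L[ℂ] H := (w1 - w2)⁻¹ • (A - w2 • (1 : H →L[ℂ] H)) with hB
    have hg : ∀ z : H, ‖z‖ = 1 → ⟪z, B z⟫ = (w1 - w2)⁻¹ * (⟪z, A z⟫ - w2) := by
      intro z hz
      rw [hB]
      simp only [ContinuousLinearMap.smul_apply, ContinuousLinearMap.sub_apply,
        ContinuousLinearMap.smul_apply, ContinuousLinearMap.one_apply,
        inner_smul_right, inner_sub_right]
      rw [inner_self_eq_norm_sq_to_K, hz]
      push_cast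
      ring
    have hgx : ⟪x, B x⟫ = 1 := by
      rw [hg x hx, ← hw1, inv_mul_cancel₀ hd]
    have hgy : ⟪y, B y⟫ = 0 := by
      rw [hg y hy, ← hw2, sub_self, mul_zero]
    obtain ⟨u, hu, huB⟩ := exists_unit_inner_eq B hx hy hgx hgy
      (Set.mem_Icc.mpr ⟨ha, by linarith⟩)
    refine ⟨u, hu, ?_⟩
    have h1 : (w1 - w2)⁻¹ * (⟪u, A u⟫ - w2) = (a : ℂ) := by rw [← hg u hu, huB]
    have h2 : ⟪u, A u⟫ = w2 + (a : ℂ) * (w1 - w2) := by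
      field_simp at h1
      linear_combination h1
    rw [h2]
    have hb' : b = 1 - a := by linarith
    rw [hb']
    push_cast [Complex.real_smul]
    ring

/-- Points of a "good" half plane bound the numerical range. -/
lemma numRange_re_le (A : H →L[ℂ] H) (θ ω : ℝ)
    (hsub : halfPlane θ ω ⊆ resolventSet ℂ A)
    (hbound : ∀ w ∈ halfPlane θ ω,
      ‖resolvent A w‖ ≤ 1 / ((Complex.exp (-(θ : ℂ) * Complex.I) * w).re - ω))
    (x : H) (hx : ‖x‖ = 1) :
    (Complex.exp (-(θ : ℂ) * Complex.I) * ⟪x, A x⟫).re ≤ ω := by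
  set ε : ℂ := Complex.exp (-(θ : ℂ) * I) with hε
  set η : ℂ := Complex.exp ((θ : ℂ) * I) with hη
  have hεη : ε * η = 1 := by
    rw [hε, hη, ← Complex.exp_add]
    ring_nf
    exact Complex.exp_zero
  have hconjη : (starRingEnd ℂ) η = ε := by
    rw [hη, hε, ← Complex.exp_conj]
    congr 1
    simp [map_mul, Complex.conj_ofReal, Complex.conj_I]
  set w : ℂ := ⟪x, A x⟫ with hw
  set c : ℝ := (ε * w).re with hc
  set M : ℝ := ‖A x‖ with hM
  by_contra hcon
  push_neg at hcon
  have main : ∀ u : ℝ, ω < u → (u - ω)^2 ≤ u^2 - 2*u*c + M^2 := by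
    intro u hu
    set zu : ℂ := (u : ℂ) * η with hzu
    have hεzu : ε * zu = (u : ℂ) := by
      rw [hzu, mul_comm (u:ℂ) η, ← mul_assoc, hεη, one_mul]
    have hmem : zu ∈ halfPlane θ ω := by
      show ω < (ε * zu).re
      rw [hεzu]
      simpa using hu
    have hres : IsUnit (algebraMap ℂ (H →L[ℂ] H) zu - A) := hsub hmem
    set T : H →L[ℂ] H := algebraMap ℂ (H →L[ℂ] H) zu - A with hT
    have hbnd : ‖resolvent A zu‖ ≤ 1 / (u - ω) := by
      have := hbound zu hmem
      rwa [hεzu, Complex.ofReal_re] at this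
    have hTx : u - ω ≤ ‖T x‖ := by
      have hRmul : Ring.inverse T * T = 1 := Ring.inverse_mul_cancel T hres
      have h1 : (1:ℝ) = ‖Ring.inverse T (T x)‖ := by
        have : Ring.inverse T (T x) = x := by
          calc Ring.inverse T (T x) = (Ring.inverse T * T) x := rfl
            _ = x := by rw [hRmul]; rfl
        rw [this, hx]
      have h2 : ‖Ring.inverse T (T x)‖ ≤ ‖resolvent A zu‖ * ‖T x‖ :=
        ContinuousLinearMap.le_opNorm _ _
      have h3 : ‖resolvent A zu‖ * ‖T x‖ ≤ (1 / (u - ω)) * ‖T x‖ :=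
        mul_le_mul_of_nonneg_right hbnd (norm_nonneg _)
      have h4 : (1:ℝ) ≤ (1 / (u - ω)) * ‖T x‖ := h1.trans_le (h2.trans h3)
      have huω : (0:ℝ) < u - ω := by linarith
      rw [div_mul_eq_mul_div, one_mul, le_div_iff₀ huω, one_mul] at h4
      linarith
    have hTxx : T x = zu • x - A x := by
      rw [hT, ContinuousLinearMap.sub_apply, Algebra.algebraMap_eq_smul_one,
        ContinuousLinearMap.smul_apply, ContinuousLinearMap.one_apply]
    have hreinner : RCLike.re ⟪zu • x, A x⟫ = u * c := by
      rw [inner_smul_left]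
      have hconjzu : (starRingEnd ℂ) zu = (u:ℂ) * ε := by
        rw [hzu, map_mul, Complex.conj_ofReal, hconjη]
      rw [hconjzu, ← hw, mul_assoc, hc]
      simp [RCLike.re_to_complex, Complex.re_ofReal_mul]
    have hnzu : ‖zu • x‖ ^ 2 = u ^ 2 := by
      rw [norm_smul, hx, mul_one, hzu, norm_mul]
      have : ‖η‖ = 1 := by
        rw [hη]
        simp [Complex.norm_exp]
      rw [this, mul_one, Complex.norm_real, Real.norm_eq_abs, _root_.sq_abs]
    have hTxsq : ‖T x‖ ^ 2 = u^2 - 2*u*c + M^2 := by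
      rw [hTxx, @norm_sub_sq ℂ, hreinner, hnzu, ← hM]
      ring
    have := hTx
    nlinarith [norm_nonneg (T x)]
  set u : ℝ := max (ω + 1) ((M^2 - ω^2 + 1) / (2*(c - ω))) with hu
  have hu1 : ω < u := lt_of_lt_of_le (by linarith) (le_max_left _ _)
  have hu2 : (M^2 - ω^2 + 1) / (2*(c - ω)) ≤ u := le_max_right _ _
  have hcω : (0:ℝ) < 2*(c - ω) := by linarith
  rw [div_le_iff₀ hcω] at hu2
  have := main u hu1
  nlinarith

end Aux

/-- For a bounded operator on a complex Hilbert space, the numerical spectrum is the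
closure of the numerical range `W(A) = {⟨Ax, x⟩ : ‖x‖ = 1}` (inner product linear in
the first entry, i.e. `⟪x, A x⟫` in Mathlib's convention). -/
theorem numSpectrum_eq_closure_numericalRange {H : Type*} [NormedAddCommGroup H]
    [InnerProductSpace ℂ H] [CompleteSpace H] (A : H →L[ℂ] H) :
    numSpectrum A = closure {z : ℂ | ∃ x : H, ‖x‖ = 1 ∧ z = (inner ℂ x (A x) : ℂ)} := by
  set W : Set ℂ := {z : ℂ | ∃ x : H, ‖x‖ = 1 ∧ z = (inner ℂ x (A x) : ℂ)} with hWdef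
  suffices h : numResolventSet A = (closure W)ᶜ by
    rw [numSpectrum, h, compl_compl]
  ext z
  simp only [Set.mem_compl_iff]
  constructor
  · -- numerical resolvent ⊆ complement of closure of numerical range
    rintro ⟨θ, ω, hz, hsub, hbound⟩ hzc
    have hWsub : W ⊆ {v : ℂ | (Complex.exp (-(θ:ℂ) * Complex.I) * v).re ≤ ω} := by
      rintro _ ⟨x, hx, rfl⟩
      exact numRange_re_le A θ ω hsub hbound x hx
    have hclosed : IsClosed {v : ℂ | (Complex.exp (-(θ:ℂ) * Complex.I) * v).re ≤ ω} := by
      apply isClosed_le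
      · fun_prop
      · exact continuous_const
    have hle := closure_minimal hWsub hclosed hzc
    have hgt : ω < (Complex.exp (-(θ:ℂ) * Complex.I) * z).re := hz
    exact absurd hle (not_le.mpr hgt)
  · -- complement of closure of numerical range ⊆ numerical resolvent
    intro hznot
    by_cases hex : ∃ x : H, ‖x‖ = 1
    · -- nontrivial space: Hahn-Banach separation
      have hWconv : Convex ℝ (closure W) := (convex_numRange A).closure
      obtain ⟨f, u, hfs, hfz⟩ := geometric_hahn_banach_closed_point hWconv isClosed_closure hznot
      set c : ℂ := ⟨f 1, -(f Complex.I)⟩ with hcdef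
      have hfc : ∀ v : ℂ, f v = (c * v).re := by
        intro v
        have hv : v = (v.re : ℝ) • (1:ℂ) + (v.im : ℝ) • Complex.I := by
          simp [Complex.real_smul]
        calc f v = f ((v.re : ℝ) • (1:ℂ) + (v.im : ℝ) • Complex.I) := by rw [← hv]
          _ = v.re * f 1 + v.im * f Complex.I := by
              rw [map_add, map_smul, map_smul]; simp [smul_eq_mul]
          _ = (c * v).re := by
              simp [hcdef, Complex.mul_re]
              ring
      have hcne : c ≠ 0 := by
        intro h0
        obtain ⟨x, hx⟩ := hex
        have hb : (inner ℂ x (A x) : ℂ) ∈ closure W := subset_closure ⟨x, hx, rfl⟩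
        have h1 := hfs _ hb
        have h2 := hfz
        rw [hfc, h0, zero_mul] at h1 h2
        simp at h1 h2
        linarith
      set R : ℝ := ‖c‖ with hR
      have hRpos : 0 < R := norm_pos_iff.mpr hcne
      have hexp : Complex.exp (-((-(Complex.arg c) : ℝ) : ℂ) * Complex.I) = c / (R:ℂ) := by
        have harg : -((-(Complex.arg c) : ℝ) : ℂ) = ((Complex.arg c : ℝ) : ℂ) := by
          push_cast; ring
        rw [harg, eq_div_iff (by exact_mod_cast hRpos.ne' : (R:ℂ) ≠ 0), mul_comm]
        exact (Complex.norm_mul_exp_arg_mul_I c).symm ▸ rfl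
      have hre : ∀ v : ℂ, (Complex.exp (-((-(Complex.arg c) : ℝ) : ℂ) * Complex.I) * v).re
          = (c * v).re / R := by
        intro v
        rw [hexp]
        have hh : c / (R:ℂ) * v = (c * v) / (R:ℂ) := by ring
        rw [hh, Complex.div_ofReal_re]
      have hzmem : z ∈ halfPlane (-(Complex.arg c)) (u / R) := by
        show u / R < _
        rw [hre z]
        have := hfz
        rw [hfc] at this
        gcongr
      have hkey : ∀ v ∈ halfPlane (-(Complex.arg c)) (u / R),
          v ∈ resolventSet ℂ A ∧ ‖resolvent A v‖
            ≤ 1 / ((Complex.exp (-((-(Complex.arg c) : ℝ) : ℂ) * Complex.I) * v).re - u / R) := by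
        intro v hv
        have hv' : u / R < (c * v).re / R := by rw [← hre v]; exact hv
        have hulv : u < (c * v).re := by
          by_contra hcon
          push_neg at hcon
          have : (c * v).re / R ≤ u / R := by gcongr
          linarith
        set d : ℝ := ((c * v).re - u) / R with hd
        have hdpos : 0 < d := div_pos (sub_pos.mpr hulv) hRpos
        have hdist : ∀ x : H, ‖x‖ = 1 → d ≤ ‖v - (inner ℂ x (A x) : ℂ)‖ := by
          intro x hx
          have hwx : (c * (inner ℂ x (A x) : ℂ)).re < u := by
            rw [← hfc]
            exact hfs _ (subset_closure ⟨x, hx, rfl⟩)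
          have h1 : d ≤ ((c * v).re - (c * (inner ℂ x (A x) : ℂ)).re) / R := by
            rw [hd]
            gcongr <;> linarith
          have h2 : ((c * v).re - (c * (inner ℂ x (A x) : ℂ)).re)
              = (c * (v - (inner ℂ x (A x) : ℂ))).re := by
            rw [mul_sub, Complex.sub_re]
          have h3 : (c * (v - (inner ℂ x (A x) : ℂ))).re
              ≤ ‖c * (v - (inner ℂ x (A x) : ℂ))‖ := Complex.re_le_norm _
          have h4 : ‖c * (v - (inner ℂ x (A x) : ℂ))‖
              = R * ‖v - (inner ℂ x (A x) : ℂ)‖ := by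
            rw [norm_mul, hR]
          calc d ≤ ((c * v).re - (c * (inner ℂ x (A x) : ℂ)).re) / R := h1
            _ = (c * (v - (inner ℂ x (A x) : ℂ))).re / R := by rw [h2]
            _ ≤ ‖c * (v - (inner ℂ x (A x) : ℂ))‖ / R := by gcongr
            _ = R * ‖v - (inner ℂ x (A x) : ℂ)‖ / R := by rw [h4]
            _ = ‖v - (inner ℂ x (A x) : ℂ)‖ := by field_simp
            _ = ‖v - (inner ℂ x (A x) : ℂ)‖ := rfl
        obtain ⟨hres, hbnd⟩ := key_resolvent A v d hdpos hdist
        refine ⟨hres, ?_⟩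
        have heqd : (Complex.exp (-((-(Complex.arg c) : ℝ) : ℂ) * Complex.I) * v).re - u / R
            = d := by
          rw [hre v, hd]
          ring
        rw [heqd]
        exact hbnd
      exact ⟨-(Complex.arg c), u / R, hzmem, fun v hv => (hkey v hv).1,
        fun v hv => (hkey v hv).2⟩
    · -- trivial space
      have hall : ∀ v : H, v = 0 := by
        intro v
        by_contra hv
        have hn : (0:ℝ) < ‖v‖ := norm_pos_iff.mpr hv
        exact hex ⟨((‖v‖⁻¹ : ℝ):ℂ) • v, by
          rw [norm_smul]
          simp [abs_of_pos (inv_pos.mpr hn), inv_mul_cancel₀ hn.ne']⟩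
      refine ⟨0, z.re - 1, ?_, ?_, ?_⟩
      · show z.re - 1 < (Complex.exp (-(0:ℂ) * Complex.I) * z).re
        simp
      · intro v hv
        show IsUnit (algebraMap ℂ (H →L[ℂ] H) v - A)
        have h1 : (algebraMap ℂ (H →L[ℂ] H) v - A) = 1 :=
          ContinuousLinearMap.ext fun w => (hall _).trans (hall _).symm
        rw [h1]
        exact isUnit_one
      · intro v hv
        have h0 : ‖resolvent A v‖ = 0 := by
          have : (resolvent A v : H →L[ℂ] H) = 0 :=
            ContinuousLinearMap.ext fun w => (hall _).trans (hall _).symm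
          rw [this, norm_zero]
        rw [h0]
        have hpos : (0:ℝ) < (Complex.exp (-(0:ℂ) * Complex.I) * v).re - (z.re - 1) :=
          sub_pos.mpr hv
        positivity
end
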